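/- For 0 < δ_ξ ≤ 1, there is a constant c > 0 independent of δ_ξ and δ_α such that ‖G_{δ_ξ,δ_α} − G_{δ_ξ}‖ ≤ c · δ_α/δ_ξ, where the norm is the operator norm L²(Ω) → L²(Ω'); the constant c remains bounded for R bounded and R_E bounded away from 1. -/

import Mathlib

open MeasureTheory Real Set Filter

noncomputable section

/-- The unit direction vector `θ(φ) = (cos φ, sin φ)`. -/
def dirv (φ : ℝ) : ℝ × ℝ := (Real.cos φ, Real.sin φ)

/-- The perpendicular direction `θ(φ)^⊥ = (−sin φ, cos φ)`. -/
def dirp (φ : ℝ) : ℝ × ℝ := (-Real.sin φ, Real.cos φ)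

/-- Euclidean inner product on `ℝ²`. -/
def dot2 (x y : ℝ × ℝ) : ℝ := x.1 * y.1 + x.2 * y.2

/-- The open unit disk `Ω = B(0,1) ⊂ ℝ²`. -/
def unitDisk : Set (ℝ × ℝ) := {x : ℝ × ℝ | x.1 ^ 2 + x.2 ^ 2 < 1}

/-- The Radon transform `[R f](s,φ) = ∫ f(s θ(φ) + t θ(φ)^⊥) dt`. -/
def Radon (f : ℝ × ℝ → ℝ) (s φ : ℝ) : ℝ := ∫ t : ℝ, f (s • dirv φ + t • dirp φ)

/-- The backprojection `[R* g](x) = ∫_{S¹} g(x·θ(φ), φ) dφ`. -/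
def Backproj (g : ℝ → ℝ → ℝ) (x : ℝ × ℝ) : ℝ := ∫ φ in Ioc (-π) π, g (dot2 x (dirv φ)) φ

/-- `L²` norm of an image on the plane (for images supported in the unit disk,
this is the `L²(Ω)` norm). -/
def nImg (f : ℝ × ℝ → ℝ) : ℝ := (∫ x : ℝ × ℝ, f x ^ 2) ^ (1/2 : ℝ)

/-- `L²(Ω)` norm of an image restricted to the unit disk. -/
def nImgD (f : ℝ × ℝ → ℝ) : ℝ := (∫ x in unitDisk, f x ^ 2) ^ (1/2 : ℝ)

/-- `L²(ℝ × S¹)` norm of a sinogram. -/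
def nSino (g : ℝ → ℝ → ℝ) : ℝ := (∫ φ in Ioc (-π) π, ∫ s : ℝ, g s φ ^ 2) ^ (1/2 : ℝ)

/-- `L²(Ω')` norm, `Ω' = (−1,1) × S¹`. -/
def nSinoD (g : ℝ → ℝ → ℝ) : ℝ :=
  (∫ φ in Ioc (-π) π, ∫ s in Ioo (-1 : ℝ) 1, g s φ ^ 2) ^ (1/2 : ℝ)

/-- `L²` modulus of continuity of a sinogram: offset shift `h`, angular shift `γ`. -/
def modCont (g : ℝ → ℝ → ℝ) (h γ : ℝ) : ℝ :=
  (∫ φ in Ioc (-π) π, ∫ s : ℝ, (g (s + h) (φ + γ) - g s φ) ^ 2) ^ (1/2 : ℝ)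

/-- `sup_{|h| < r} ω_g(h, 0)`. -/
def supMod (g : ℝ → ℝ → ℝ) (r : ℝ) : ℝ :=
  sSup ((fun h => modCont g h 0) '' Ioo (-r) r)

/-- `f` vanishes outside the unit disk. -/
def SuppDisk (f : ℝ × ℝ → ℝ) : Prop := ∀ x, x ∉ unitDisk → f x = 0

/-- `g` vanishes for offsets outside `(−1, 1)`. -/
def SuppSino (g : ℝ → ℝ → ℝ) : Prop := ∀ s φ, s ∉ Ioo (-1 : ℝ) 1 → g s φ = 0

/-- `g` is `2π`-periodic in the angular variable, i.e. a function on `ℝ × S¹`. -/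
def PeriodicSino (g : ℝ → ℝ → ℝ) : Prop := ∀ s φ, g s (φ + 2 * π) = g s φ

/-- `f ∈ L²(ℝ²)`. -/
def L2Img (f : ℝ × ℝ → ℝ) : Prop := MemLp f 2 (volume : Measure (ℝ × ℝ))

/-- `g ∈ L²(ℝ × S¹)`. -/
def L2Sino (g : ℝ → ℝ → ℝ) : Prop :=
  MemLp (fun z : ℝ × ℝ => g z.1 z.2) 2
    ((volume : Measure (ℝ × ℝ)).restrict (univ ×ˢ Ioc (-π) π))

/-- The hat profile `w_δ(t) = max(0, δ − |t|)`. -/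
def hatw (δ t : ℝ) : ℝ := max 0 (δ - |t|)

/-- Detector centers `s_p = δ_s (p − (P+1)/2)`. -/
def sCen (δs : ℝ) (P p : ℕ) : ℝ := δs * ((p : ℝ) - ((P : ℝ) + 1) / 2)

/-- Detector cells `S_p = s_p + [−δ_s/2, δ_s/2)`. -/
def sCell (δs : ℝ) (P p : ℕ) : Set ℝ := Ico (sCen δs P p - δs / 2) (sCen δs P p + δs / 2)

/-- The detector cells cover `(−1, 1)`. -/
def CoversI (δs : ℝ) (P : ℕ) : Prop := Ioo (-1 : ℝ) 1 ⊆ ⋃ p ∈ Finset.Icc 1 P, sCell δs P p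

/-- Offset-discretized Radon transform `R_{δ_s}`. -/
def RadonS (δs : ℝ) (P : ℕ) (f : ℝ × ℝ → ℝ) (s φ : ℝ) : ℝ :=
  (δs ^ 2)⁻¹ * ∑ p ∈ Finset.Icc 1 P,
    Set.indicator (sCell δs P p) (fun _ => (1 : ℝ)) s *
      ∫ t : ℝ, hatw δs (t - sCen δs P p) * Radon f t φ

/-- The adjoint of `R_{δ_s}`. -/
def RadonSStar (δs : ℝ) (P : ℕ) (g : ℝ → ℝ → ℝ) (x : ℝ × ℝ) : ℝ :=
  (δs ^ 2)⁻¹ * ∑ p ∈ Finset.Icc 1 P,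
    ∫ φ in Ioc (-π) π,
      hatw δs (dot2 x (dirv φ) - sCen δs P p) * ∫ s in sCell δs P p, g s φ

/-- A valid full angular grid `φ_1 < … < φ_Q` in `[−π, π)` with the wrap-around
conventions `φ_0 = φ_Q − 2π` and `φ_{Q+1} = φ_1 + 2π`. -/
structure AngGrid (Q : ℕ) (φs : ℕ → ℝ) : Prop where
  one_le : 1 ≤ Q
  mono : ∀ q, 1 ≤ q → q < Q → φs q < φs (q + 1)
  mem : ∀ q, 1 ≤ q → q ≤ Q → φs q ∈ Ico (-π) π
  wrap0 : φs 0 = φs Q - 2 * π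
  wrapQ : φs (Q + 1) = φs 1 + 2 * π

/-- `δφ` bounds all angular gaps of the grid (it holds for `δφ` the maximal gap). -/
def GapLe (Q : ℕ) (φs : ℕ → ℝ) (δφ : ℝ) : Prop :=
  ∀ q, 1 ≤ q → q ≤ Q → φs (q + 1) - φs q ≤ δφ

/-- The angular cell `Θ_q`, taken modulo `2π`. -/
def angCell (φs : ℕ → ℝ) (q : ℕ) : Set ℝ :=
  {φ : ℝ | ∃ k : ℤ, φ + 2 * π * (k : ℝ) ∈
    Ico ((φs (q - 1) + φs q) / 2) ((φs q + φs (q + 1)) / 2)}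

/-- Offset- and angle-discretized Radon transform `R_{δ_s, δ_φ}`. -/
def RadonSA (δs : ℝ) (P Q : ℕ) (φs : ℕ → ℝ) (f : ℝ × ℝ → ℝ) (s φ : ℝ) : ℝ :=
  (δs ^ 2)⁻¹ * ∑ q ∈ Finset.Icc 1 Q, ∑ p ∈ Finset.Icc 1 P,
    Set.indicator (sCell δs P p) (fun _ => (1 : ℝ)) s *
    Set.indicator (angCell φs q) (fun _ => (1 : ℝ)) φ *
    ∫ x in unitDisk, hatw δs (dot2 x (dirv (φs q)) - sCen δs P p) * f x

/-- Pixel centers `x_{ij}`. -/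
def pixCen (δx : ℝ) (N M i j : ℕ) : ℝ × ℝ :=
  (δx * ((i : ℝ) - ((N : ℝ) + 1) / 2), δx * ((j : ℝ) - ((M : ℝ) + 1) / 2))

/-- Pixels `X_{ij} = x_{ij} + [−δ_x/2, δ_x/2)²`. -/
def pixCell (δx : ℝ) (N M i j : ℕ) : Set (ℝ × ℝ) :=
  Ico ((pixCen δx N M i j).1 - δx / 2) ((pixCen δx N M i j).1 + δx / 2) ×ˢ
    Ico ((pixCen δx N M i j).2 - δx / 2) ((pixCen δx N M i j).2 + δx / 2)

/-- The pixels cover the unit disk. -/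
def CoversDisk (δx : ℝ) (N M : ℕ) : Prop :=
  unitDisk ⊆ ⋃ i ∈ Finset.Icc 1 N, ⋃ j ∈ Finset.Icc 1 M, pixCell δx N M i j

/-- The fully discrete (pixel-driven) Radon transform `R^{δ_x}_{δ_s, δ_φ}`. -/
def RadonFull (δs : ℝ) (P Q : ℕ) (φs : ℕ → ℝ) (δx : ℝ) (N M : ℕ)
    (f : ℝ × ℝ → ℝ) (s φ : ℝ) : ℝ :=
  (δs ^ 2)⁻¹ * ∑ q ∈ Finset.Icc 1 Q, ∑ p ∈ Finset.Icc 1 P,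
    Set.indicator (sCell δs P p) (fun _ => (1 : ℝ)) s *
    Set.indicator (angCell φs q) (fun _ => (1 : ℝ)) φ *
    ∑ i ∈ Finset.Icc 1 N, ∑ j ∈ Finset.Icc 1 M,
      hatw δs (dot2 (pixCen δx N M i j) (dirv (φs q)) - sCen δs P p) *
        ∫ x in pixCell δx N M i j, f x

/-- The adjoint of the fully discrete Radon transform (pixel-driven backprojection). -/
def RadonFullStar (δs : ℝ) (P Q : ℕ) (φs : ℕ → ℝ) (δx : ℝ) (N M : ℕ)
    (g : ℝ → ℝ → ℝ) (x : ℝ × ℝ) : ℝ :=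
  ∑ i ∈ Finset.Icc 1 N, ∑ j ∈ Finset.Icc 1 M,
    Set.indicator (pixCell δx N M i j) (fun _ => (1 : ℝ)) x *
    ((δs ^ 2)⁻¹ * ∑ q ∈ Finset.Icc 1 Q, ∑ p ∈ Finset.Icc 1 P,
      hatw δs (dot2 (pixCen δx N M i j) (dirv (φs q)) - sCen δs P p) *
        ∫ φ in Ico ((φs (q - 1) + φs q) / 2) ((φs q + φs (q + 1)) / 2),
          ∫ s in sCell δs P p, g s φ)

/- ---------- sparse / limited angle ---------- -/

/-- Limited-angle angular grid on `A = (φ_1, φ_Q)` with `φ_0 = φ_1`, `φ_{Q+1} = φ_Q`. -/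
structure AngGridA (Q : ℕ) (φs : ℕ → ℝ) : Prop where
  two_le : 2 ≤ Q
  mono : ∀ q, 1 ≤ q → q < Q → φs q < φs (q + 1)
  mem : ∀ q, 1 ≤ q → q ≤ Q → φs q ∈ Ico (-π) π
  wrap0 : φs 0 = φs 1
  wrapQ : φs (Q + 1) = φs Q

/-- `L²(Ω'_A)` norm, `Ω'_A = (−1,1) × A` with `A = (a,b)`. -/
def nSinoA (a b : ℝ) (g : ℝ → ℝ → ℝ) : ℝ :=
  (∫ φ in Ioo a b, ∫ s in Ioo (-1 : ℝ) 1, g s φ ^ 2) ^ (1/2 : ℝ)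

/-- Limited-angle backprojection `(R^A)*`. -/
def BackprojA (a b : ℝ) (g : ℝ → ℝ → ℝ) (x : ℝ × ℝ) : ℝ :=
  ∫ φ in Ioo a b, g (dot2 x (dirv φ)) φ

/-- `g ∈ L²((−1,1) × A)` (as a function on `ℝ × A`). -/
def L2SinoA (a b : ℝ) (g : ℝ → ℝ → ℝ) : Prop :=
  MemLp (fun z : ℝ × ℝ => g z.1 z.2) 2
    ((volume : Measure (ℝ × ℝ)).restrict (univ ×ˢ Ioo a b))

/-- limited-angle modulus of continuity `ω_g(h, 0)` on `ℝ × A`. -/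
def modContA (a b : ℝ) (g : ℝ → ℝ → ℝ) (h : ℝ) : ℝ :=
  (∫ φ in Ioo a b, ∫ s : ℝ, (g (s + h) φ - g s φ) ^ 2) ^ (1/2 : ℝ)

/-- Sparse-angle `L²(Ω'_F)` norm (counting measure in the angular direction). -/
def nSinoF (Q : ℕ) (φs : ℕ → ℝ) (g : ℝ → ℝ → ℝ) : ℝ :=
  (∑ q ∈ Finset.Icc 1 Q, ∫ s in Ioo (-1 : ℝ) 1, g s (φs q) ^ 2) ^ (1/2 : ℝ)

/-- Sparse-angle modulus of continuity `ω_g(h, 0)`. -/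
def modContF (Q : ℕ) (φs : ℕ → ℝ) (g : ℝ → ℝ → ℝ) (h : ℝ) : ℝ :=
  (∑ q ∈ Finset.Icc 1 Q, ∫ s : ℝ, (g (s + h) (φs q) - g s (φs q)) ^ 2) ^ (1/2 : ℝ)

/-- Sparse-angle backprojection `(R^F)* g (x) = Σ_q g(x·θ_q, φ_q)`. -/
def BackprojF (Q : ℕ) (φs : ℕ → ℝ) (g : ℝ → ℝ → ℝ) (x : ℝ × ℝ) : ℝ :=
  ∑ q ∈ Finset.Icc 1 Q, g (dot2 x (dirv (φs q))) (φs q)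

/-- The discrete sparse-angle Radon transform at a single angle `θang`. -/
def RadonSparse (δs : ℝ) (P : ℕ) (δx : ℝ) (N M : ℕ) (θang : ℝ)
    (f : ℝ × ℝ → ℝ) (s : ℝ) : ℝ :=
  (δs ^ 2)⁻¹ * ∑ p ∈ Finset.Icc 1 P,
    Set.indicator (sCell δs P p) (fun _ => (1 : ℝ)) s *
    ∑ i ∈ Finset.Icc 1 N, ∑ j ∈ Finset.Icc 1 M,
      hatw δs (dot2 (pixCen δx N M i j) (dirv θang) - sCen δs P p) *
        ∫ x in pixCell δx N M i j, f x

/-- Adjoint of the discrete sparse-angle Radon transform. -/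
def RadonSparseStar (δs : ℝ) (P : ℕ) (δx : ℝ) (N M Q : ℕ) (φs : ℕ → ℝ)
    (g : ℝ → ℝ → ℝ) (x : ℝ × ℝ) : ℝ :=
  ∑ i ∈ Finset.Icc 1 N, ∑ j ∈ Finset.Icc 1 M,
    Set.indicator (pixCell δx N M i j) (fun _ => (1 : ℝ)) x *
    ((δs ^ 2)⁻¹ * ∑ q ∈ Finset.Icc 1 Q, ∑ p ∈ Finset.Icc 1 P,
      hatw δs (dot2 (pixCen δx N M i j) (dirv (φs q)) - sCen δs P p) *
        ∫ s in sCell δs P p, g s (φs q))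

/- ---------- fanbeam ---------- -/

/-- Detector width `W = 2R/√(R_E² − 1)`. -/
def Wfan (RE R : ℝ) : ℝ := 2 * R / Real.sqrt (RE ^ 2 - 1)

/-- The fanbeam transform `F`. -/
def Fanbeam (RE R : ℝ) (f : ℝ × ℝ → ℝ) (ξ α : ℝ) : ℝ :=
  Real.sqrt (ξ ^ 2 + R ^ 2) *
    ∫ t : ℝ, f (t • (ξ • dirv α + R • dirp α) - RE • dirp α)

/-- The unweighted fanbeam transform `G`. -/
def GFan (RE R : ℝ) (f : ℝ × ℝ → ℝ) (ξ α : ℝ) : ℝ :=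
  ∫ t : ℝ, f (t • (ξ • dirv α + R • dirp α) - RE • dirp α)

/-- Fan projection coordinate `ξ(x, α) = x·θ(α) R / (x·θ(α)^⊥ + R_E)`. -/
def fanProj (RE R : ℝ) (x : ℝ × ℝ) (α : ℝ) : ℝ :=
  dot2 x (dirv α) * R / (dot2 x (dirp α) + RE)

/-- Adjoint `G*` of the unweighted fanbeam transform. -/
def GFanStar (RE R : ℝ) (g : ℝ → ℝ → ℝ) (x : ℝ × ℝ) : ℝ :=
  ∫ α in Ioc (-π) π, (dot2 x (dirp α) + RE)⁻¹ * g (fanProj RE R x α) α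

/-- Adjoint `F*` of the fanbeam transform. -/
def FanbeamStar (RE R : ℝ) (g : ℝ → ℝ → ℝ) (x : ℝ × ℝ) : ℝ :=
  ∫ α in Ioc (-π) π,
    Real.sqrt (fanProj RE R x α ^ 2 + R ^ 2) * (dot2 x (dirp α) + RE)⁻¹ *
      g (fanProj RE R x α) α

/-- `L²(Ω')` norm for the fanbeam geometry, `Ω' = (−W/2, W/2) × S¹`. -/
def nSinoW (RE R : ℝ) (g : ℝ → ℝ → ℝ) : ℝ :=
  (∫ α in Ioc (-π) π, ∫ ξ in Ioo (-(Wfan RE R) / 2) (Wfan RE R / 2), g ξ α ^ 2) ^ (1/2 : ℝ)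

/-- `g` vanishes for offsets outside `(−W/2, W/2)`. -/
def SuppSinoW (RE R : ℝ) (g : ℝ → ℝ → ℝ) : Prop :=
  ∀ ξ α, ξ ∉ Ioo (-(Wfan RE R) / 2) (Wfan RE R / 2) → g ξ α = 0

/-- `g ∈ L²((−W/2, W/2) × S¹)`. -/
def L2SinoW (RE R : ℝ) (g : ℝ → ℝ → ℝ) : Prop :=
  MemLp (fun z : ℝ × ℝ => g z.1 z.2) 2
    ((volume : Measure (ℝ × ℝ)).restrict
      (Ioo (-(Wfan RE R) / 2) (Wfan RE R / 2) ×ˢ Ioc (-π) π))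

/-- Offset-discretized unweighted fanbeam transform `G_{δ_ξ}`, `δ_ξ = W/P`. -/
def GFanS (RE R : ℝ) (P : ℕ) (f : ℝ × ℝ → ℝ) (ξ α : ℝ) : ℝ :=
  ((Wfan RE R / P) ^ 2)⁻¹ * ∑ p ∈ Finset.Icc 1 P,
    Set.indicator (sCell (Wfan RE R / P) P p) (fun _ => (1 : ℝ)) ξ *
      ∫ x in unitDisk,
        hatw (Wfan RE R / P) (fanProj RE R x α - sCen (Wfan RE R / P) P p) *
          f x / (dot2 x (dirp α) + RE)

/-- Adjoint of `G_{δ_ξ}`. -/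
def GFanSStar (RE R : ℝ) (P : ℕ) (g : ℝ → ℝ → ℝ) (x : ℝ × ℝ) : ℝ :=
  ((Wfan RE R / P) ^ 2)⁻¹ * ∑ p ∈ Finset.Icc 1 P,
    ∫ α in Ioc (-π) π,
      hatw (Wfan RE R / P) (fanProj RE R x α - sCen (Wfan RE R / P) P p) *
        (dot2 x (dirp α) + RE)⁻¹ *
        ∫ ξ in sCell (Wfan RE R / P) P p, g ξ α

/-- Offset- and angle-discretized `G_{δ_ξ, δ_α}`. -/
def GFanSA (RE R : ℝ) (P Q : ℕ) (αs : ℕ → ℝ) (f : ℝ × ℝ → ℝ) (ξ α : ℝ) : ℝ :=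
  ((Wfan RE R / P) ^ 2)⁻¹ * ∑ p ∈ Finset.Icc 1 P, ∑ q ∈ Finset.Icc 1 Q,
    Set.indicator (sCell (Wfan RE R / P) P p) (fun _ => (1 : ℝ)) ξ *
    Set.indicator (angCell αs q) (fun _ => (1 : ℝ)) α *
      ∫ x in unitDisk,
        hatw (Wfan RE R / P) (fanProj RE R x (αs q) - sCen (Wfan RE R / P) P p) *
          f x / (dot2 x (dirp (αs q)) + RE)

/-- Fully discrete unweighted fanbeam transform `G^{δ_x}_{δ_ξ, δ_α}`. -/
def GFanFull (RE R : ℝ) (P Q : ℕ) (αs : ℕ → ℝ) (δx : ℝ) (N M : ℕ)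
    (f : ℝ × ℝ → ℝ) (ξ α : ℝ) : ℝ :=
  ((Wfan RE R / P) ^ 2)⁻¹ * ∑ p ∈ Finset.Icc 1 P, ∑ q ∈ Finset.Icc 1 Q,
    Set.indicator (sCell (Wfan RE R / P) P p) (fun _ => (1 : ℝ)) ξ *
    Set.indicator (angCell αs q) (fun _ => (1 : ℝ)) α *
    ∑ i ∈ Finset.Icc 1 N, ∑ j ∈ Finset.Icc 1 M,
      hatw (Wfan RE R / P)
          (fanProj RE R (pixCen δx N M i j) (αs q) - sCen (Wfan RE R / P) P p) *
        (dot2 (pixCen δx N M i j) (dirp (αs q)) + RE)⁻¹ *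
        ∫ x in pixCell δx N M i j, f x

/-- Fully discrete pixel-driven fanbeam transform `F^{δ_x}_{δ_ξ, δ_α}`. -/
def FanFull (RE R : ℝ) (P Q : ℕ) (αs : ℕ → ℝ) (δx : ℝ) (N M : ℕ)
    (f : ℝ × ℝ → ℝ) (ξ α : ℝ) : ℝ :=
  ((Wfan RE R / P) ^ 2)⁻¹ * ∑ p ∈ Finset.Icc 1 P, ∑ q ∈ Finset.Icc 1 Q,
    Set.indicator (sCell (Wfan RE R / P) P p) (fun _ => (1 : ℝ)) ξ *
    Set.indicator (angCell αs q) (fun _ => (1 : ℝ)) α *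
    Real.sqrt (sCen (Wfan RE R / P) P p ^ 2 + R ^ 2) *
    ∑ i ∈ Finset.Icc 1 N, ∑ j ∈ Finset.Icc 1 M,
      hatw (Wfan RE R / P)
          (fanProj RE R (pixCen δx N M i j) (αs q) - sCen (Wfan RE R / P) P p) *
        (dot2 (pixCen δx N M i j) (dirp (αs q)) + RE)⁻¹ *
        ∫ x in pixCell δx N M i j, f x

/-- Adjoint of the fully discrete pixel-driven fanbeam transform. -/
def FanFullStar (RE R : ℝ) (P Q : ℕ) (αs : ℕ → ℝ) (δx : ℝ) (N M : ℕ)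
    (g : ℝ → ℝ → ℝ) (x : ℝ × ℝ) : ℝ :=
  ∑ i ∈ Finset.Icc 1 N, ∑ j ∈ Finset.Icc 1 M,
    Set.indicator (pixCell δx N M i j) (fun _ => (1 : ℝ)) x *
    (((Wfan RE R / P) ^ 2)⁻¹ * ∑ q ∈ Finset.Icc 1 Q, ∑ p ∈ Finset.Icc 1 P,
      hatw (Wfan RE R / P)
          (fanProj RE R (pixCen δx N M i j) (αs q) - sCen (Wfan RE R / P) P p) *
        Real.sqrt (sCen (Wfan RE R / P) P p ^ 2 + R ^ 2) *
        (dot2 (pixCen δx N M i j) (dirp (αs q)) + RE)⁻¹ *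
        ∫ α in Ico ((αs (q - 1) + αs q) / 2) ((αs q + αs (q + 1)) / 2),
          ∫ ξ in sCell (Wfan RE R / P) P p, g ξ α)


/- ---------- auxiliary lemmas for the proof ---------- -/

section AuxLemmas

lemma my_hatw_nonneg (δ t : ℝ) : 0 ≤ hatw δ t := le_max_left _ _

lemma my_hatw_le {δ : ℝ} (hδ : 0 ≤ δ) (t : ℝ) : hatw δ t ≤ δ := by
  simp only [hatw, max_le_iff]
  exact ⟨hδ, by have := abs_nonneg t; linarith⟩

lemma my_hatw_lip (δ a b : ℝ) : |hatw δ a - hatw δ b| ≤ |a - b| := by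
  have h1 : hatw δ a = max (δ - |a|) 0 := by rw [hatw, max_comm]
  have h2 : hatw δ b = max (δ - |b|) 0 := by rw [hatw, max_comm]
  rw [h1, h2]
  calc |max (δ - |a|) 0 - max (δ - |b|) 0| ≤ |(δ - |a|) - (δ - |b|)| :=
        abs_max_sub_max_le_abs _ _ _
    _ = |(|b| - |a|)| := by ring_nf
    _ ≤ |b - a| := abs_abs_sub_abs_le_abs_sub _ _
    _ = |a - b| := abs_sub_comm _ _

lemma my_hatw_pos_of_ne {δ t : ℝ} (h : hatw δ t ≠ 0) : |t| < δ := by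
  by_contra hc
  push_neg at hc
  exact h (by simp only [hatw, max_eq_left_iff]; linarith)

lemma my_abs_le_one_of_disk {x : ℝ × ℝ} (hx : x ∈ unitDisk) : |x.1| ≤ 1 ∧ |x.2| ≤ 1 := by
  have h : x.1 ^ 2 + x.2 ^ 2 < 1 := hx
  constructor <;>
  · rw [← Real.sqrt_one, ← Real.sqrt_sq_eq_abs]
    apply Real.sqrt_le_sqrt
    nlinarith [sq_nonneg x.1, sq_nonneg x.2]

lemma my_abs_dot2_dirv_le {x : ℝ × ℝ} (hx : x ∈ unitDisk) (β : ℝ) :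
    |dot2 x (dirv β)| ≤ 1 := by
  have h : x.1 ^ 2 + x.2 ^ 2 < 1 := hx
  have hsc := Real.sin_sq_add_cos_sq β
  have hd : (dot2 x (dirv β)) ^ 2 ≤ 1 := by
    simp only [dot2, dirv]
    nlinarith [sq_nonneg (x.1 * Real.sin β - x.2 * Real.cos β)]
  nlinarith [sq_abs (dot2 x (dirv β)), abs_nonneg (dot2 x (dirv β))]

lemma my_abs_dot2_dirp_le {x : ℝ × ℝ} (hx : x ∈ unitDisk) (β : ℝ) :
    |dot2 x (dirp β)| ≤ 1 := by
  have h : x.1 ^ 2 + x.2 ^ 2 < 1 := hx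
  have hsc := Real.sin_sq_add_cos_sq β
  have hd : (dot2 x (dirp β)) ^ 2 ≤ 1 := by
    simp only [dot2, dirp]
    nlinarith [sq_nonneg (x.1 * Real.cos β + x.2 * Real.sin β)]
  nlinarith [sq_abs (dot2 x (dirp β)), abs_nonneg (dot2 x (dirp β))]

lemma my_sin_lip (a b : ℝ) : |Real.sin a - Real.sin b| ≤ |a - b| := by
  rw [Real.sin_sub_sin]
  have h1 : |Real.sin ((a - b) / 2)| ≤ |(a - b) / 2| := by
    rw [← Real.sqrt_sq_eq_abs, ← Real.sqrt_sq_eq_abs]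
    exact Real.sqrt_le_sqrt (Real.sin_sq_le_sq)
  have h2 : |Real.cos ((a + b) / 2)| ≤ 1 := Real.abs_cos_le_one _
  calc |2 * Real.sin ((a - b) / 2) * Real.cos ((a + b) / 2)|
      = 2 * |Real.sin ((a - b) / 2)| * |Real.cos ((a + b) / 2)| := by
        rw [abs_mul, abs_mul]; norm_num
    _ ≤ 2 * |(a - b) / 2| * 1 := by
        apply mul_le_mul _ h2 (abs_nonneg _) (by positivity)
        have := abs_nonneg (Real.sin ((a - b) / 2)); nlinarith
    _ = |a - b| := by rw [abs_div]; norm_num; ring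

lemma my_cos_lip (a b : ℝ) : |Real.cos a - Real.cos b| ≤ |a - b| := by
  rw [Real.cos_sub_cos]
  have h1 : |Real.sin ((a - b) / 2)| ≤ |(a - b) / 2| := by
    rw [← Real.sqrt_sq_eq_abs, ← Real.sqrt_sq_eq_abs]
    exact Real.sqrt_le_sqrt (Real.sin_sq_le_sq)
  have h2 : |Real.sin ((a + b) / 2)| ≤ 1 := Real.abs_sin_le_one _
  calc |-2 * Real.sin ((a + b) / 2) * Real.sin ((a - b) / 2)|
      = 2 * |Real.sin ((a + b) / 2)| * |Real.sin ((a - b) / 2)| := by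
        rw [abs_mul, abs_mul]; norm_num
    _ ≤ 2 * 1 * |(a - b) / 2| := by
        apply mul_le_mul _ h1 (abs_nonneg _) (by positivity)
        nlinarith [abs_nonneg (Real.sin ((a + b) / 2))]
    _ = |a - b| := by rw [abs_div]; norm_num; ring

lemma my_dot2_dirv_lip {x : ℝ × ℝ} (hx : x ∈ unitDisk) (a b : ℝ) :
    |dot2 x (dirv a) - dot2 x (dirv b)| ≤ 2 * |a - b| := by
  obtain ⟨h1, h2⟩ := my_abs_le_one_of_disk hx
  have e : dot2 x (dirv a) - dot2 x (dirv b)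
      = x.1 * (Real.cos a - Real.cos b) + x.2 * (Real.sin a - Real.sin b) := by
    simp only [dot2, dirv]; ring
  rw [e]
  calc |x.1 * (Real.cos a - Real.cos b) + x.2 * (Real.sin a - Real.sin b)|
      ≤ |x.1 * (Real.cos a - Real.cos b)| + |x.2 * (Real.sin a - Real.sin b)| := abs_add_le _ _
    _ ≤ 1 * |a - b| + 1 * |a - b| := by
        rw [abs_mul, abs_mul]
        exact add_le_add (mul_le_mul h1 (my_cos_lip a b) (abs_nonneg _) one_pos.le)
          (mul_le_mul h2 (my_sin_lip a b) (abs_nonneg _) one_pos.le)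
    _ = 2 * |a - b| := by ring

lemma my_dot2_dirp_lip {x : ℝ × ℝ} (hx : x ∈ unitDisk) (a b : ℝ) :
    |dot2 x (dirp a) - dot2 x (dirp b)| ≤ 2 * |a - b| := by
  obtain ⟨h1, h2⟩ := my_abs_le_one_of_disk hx
  have e : dot2 x (dirp a) - dot2 x (dirp b)
      = (-x.1) * (Real.sin a - Real.sin b) + x.2 * (Real.cos a - Real.cos b) := by
    simp only [dot2, dirp]; ring
  rw [e]
  calc |(-x.1) * (Real.sin a - Real.sin b) + x.2 * (Real.cos a - Real.cos b)|
      ≤ |(-x.1) * (Real.sin a - Real.sin b)| + |x.2 * (Real.cos a - Real.cos b)| := abs_add_le _ _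
    _ ≤ 1 * |a - b| + 1 * |a - b| := by
        rw [abs_mul, abs_mul, abs_neg]
        exact add_le_add (mul_le_mul h1 (my_sin_lip a b) (abs_nonneg _) one_pos.le)
          (mul_le_mul h2 (my_cos_lip a b) (abs_nonneg _) one_pos.le)
    _ = 2 * |a - b| := by ring

set_option maxHeartbeats 1000000 in
lemma my_wD_lip {RE R Rm e δ : ℝ} (he : 0 < e) (he1 : e ≤ 1) (heRE : e ≤ RE - 1)
    (hRER : RE + 1 ≤ R) (hRRm : R ≤ Rm) (hδ : 0 < δ) (hδ1 : δ ≤ 1)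
    (s : ℝ) {x : ℝ × ℝ} (hx : x ∈ unitDisk) (β₁ β₂ : ℝ) :
    |hatw δ (fanProj RE R x β₁ - s) / (dot2 x (dirp β₁) + RE)
      - hatw δ (fanProj RE R x β₂ - s) / (dot2 x (dirp β₂) + RE)|
      ≤ (6 * Rm ^ 3 / e ^ 4) * |β₁ - β₂| := by
  set Δ := |β₁ - β₂| with hΔdef
  have hΔ0 : 0 ≤ Δ := abs_nonneg _
  have hRm2 : 2 ≤ Rm := by linarith
  set A₁ := dot2 x (dirv β₁); set A₂ := dot2 x (dirv β₂)
  set D₁ := dot2 x (dirp β₁) + RE with hD₁def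
  set D₂ := dot2 x (dirp β₂) + RE with hD₂def
  have hB₁ := my_abs_dot2_dirp_le hx β₁
  have hB₂ := my_abs_dot2_dirp_le hx β₂
  have hA₁ := my_abs_dot2_dirv_le hx β₁
  have hA₂ := my_abs_dot2_dirv_le hx β₂
  have hD₁lb : e ≤ D₁ := by have := (abs_le.1 hB₁).1; simp only [hD₁def]; linarith
  have hD₂lb : e ≤ D₂ := by have := (abs_le.1 hB₂).1; simp only [hD₂def]; linarith
  have hD₁ub : D₁ ≤ Rm := by have := (abs_le.1 hB₁).2; simp only [hD₁def]; linarith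
  have hD₂ub : D₂ ≤ Rm := by have := (abs_le.1 hB₂).2; simp only [hD₂def]; linarith
  have hD₁0 : (0:ℝ) < D₁ := lt_of_lt_of_le he hD₁lb
  have hD₂0 : (0:ℝ) < D₂ := lt_of_lt_of_le he hD₂lb
  have hDD : |D₂ - D₁| ≤ 2 * Δ := by
    have e0 : D₂ - D₁ = dot2 x (dirp β₂) - dot2 x (dirp β₁) := by
      simp only [hD₁def, hD₂def]; ring
    rw [e0]
    calc |dot2 x (dirp β₂) - dot2 x (dirp β₁)| ≤ 2 * |β₂ - β₁| := my_dot2_dirp_lip hx β₂ β₁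
      _ = 2 * Δ := by rw [abs_sub_comm]
  have hAA : |A₁ - A₂| ≤ 2 * Δ := my_dot2_dirv_lip hx β₁ β₂
  have hfp : |fanProj RE R x β₁ - fanProj RE R x β₂| ≤ 4 * Rm ^ 2 / e ^ 2 * Δ := by
    have key : fanProj RE R x β₁ - fanProj RE R x β₂
        = (R * (A₁ * (D₂ - D₁) + D₁ * (A₁ - A₂))) / (D₁ * D₂) := by
      simp only [fanProj, ← hD₁def, ← hD₂def]
      field_simp
      ring
    rw [key, abs_div]
    have hnum : |R * (A₁ * (D₂ - D₁) + D₁ * (A₁ - A₂))| ≤ 4 * Rm ^ 2 * Δ := by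
      calc |R * (A₁ * (D₂ - D₁) + D₁ * (A₁ - A₂))|
          ≤ |R| * (|A₁| * |D₂ - D₁| + |D₁| * |A₁ - A₂|) := by
            rw [abs_mul]
            apply mul_le_mul_of_nonneg_left _ (abs_nonneg R)
            calc |A₁ * (D₂ - D₁) + D₁ * (A₁ - A₂)|
                ≤ |A₁ * (D₂ - D₁)| + |D₁ * (A₁ - A₂)| := abs_add_le _ _
              _ = |A₁| * |D₂ - D₁| + |D₁| * |A₁ - A₂| := by rw [abs_mul, abs_mul]
        _ ≤ Rm * (1 * (2 * Δ) + Rm * (2 * Δ)) := by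
            have hRabs : |R| ≤ Rm := by rw [abs_of_pos (by linarith : (0:ℝ) < R)]; exact hRRm
            have hD₁abs : |D₁| ≤ Rm := by rw [abs_of_pos hD₁0]; exact hD₁ub
            apply mul_le_mul hRabs _ (by positivity) (by linarith)
            exact add_le_add (mul_le_mul hA₁ hDD (abs_nonneg _) one_pos.le)
              (mul_le_mul hD₁abs hAA (abs_nonneg _) (by linarith))
        _ ≤ 4 * Rm ^ 2 * Δ := by
            nlinarith [mul_nonneg (mul_nonneg (show (0:ℝ) ≤ 2*Rm by linarith) hΔ0)
              (show (0:ℝ) ≤ Rm - 1 by linarith)]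
    have hden : e ^ 2 ≤ |D₁ * D₂| := by
      rw [abs_of_pos (by positivity)]
      calc e ^ 2 = e * e := sq e
        _ ≤ D₁ * D₂ := mul_le_mul hD₁lb hD₂lb he.le (by linarith)
    calc |R * (A₁ * (D₂ - D₁) + D₁ * (A₁ - A₂))| / |D₁ * D₂|
        ≤ 4 * Rm ^ 2 * Δ / e ^ 2 := div_le_div₀ (by positivity) hnum (by positivity) hden
      _ = 4 * Rm ^ 2 / e ^ 2 * Δ := by ring
  set w₁ := hatw δ (fanProj RE R x β₁ - s)
  set w₂ := hatw δ (fanProj RE R x β₂ - s)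
  have hw12 : |w₁ - w₂| ≤ 4 * Rm ^ 2 / e ^ 2 * Δ := by
    calc |w₁ - w₂| ≤ |(fanProj RE R x β₁ - s) - (fanProj RE R x β₂ - s)| := my_hatw_lip δ _ _
      _ = |fanProj RE R x β₁ - fanProj RE R x β₂| := by ring_nf
      _ ≤ 4 * Rm ^ 2 / e ^ 2 * Δ := hfp
  rw [div_sub_div _ _ (ne_of_gt hD₁0) (ne_of_gt hD₂0), abs_div]
  have hnum2 : |w₁ * D₂ - D₁ * w₂| ≤ 4 * Rm ^ 3 / e ^ 2 * Δ + 2 * Δ := by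
    have e1 : w₁ * D₂ - D₁ * w₂ = (w₁ - w₂) * D₂ + w₂ * (D₂ - D₁) := by ring
    rw [e1]
    calc |(w₁ - w₂) * D₂ + w₂ * (D₂ - D₁)|
        ≤ |w₁ - w₂| * |D₂| + |w₂| * |D₂ - D₁| := by
          refine (abs_add_le _ _).trans ?_; rw [abs_mul, abs_mul]
      _ ≤ (4 * Rm ^ 2 / e ^ 2 * Δ) * Rm + 1 * (2 * Δ) := by
          have hD₂abs : |D₂| ≤ Rm := by rw [abs_of_pos hD₂0]; exact hD₂ub
          have hw₂abs : |w₂| ≤ 1 := by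
            rw [abs_of_nonneg (my_hatw_nonneg _ _)]
            exact (my_hatw_le hδ.le _).trans hδ1
          exact add_le_add (mul_le_mul hw12 hD₂abs (abs_nonneg _) (by positivity))
            (mul_le_mul hw₂abs hDD (abs_nonneg _) one_pos.le)
      _ = 4 * Rm ^ 3 / e ^ 2 * Δ + 2 * Δ := by ring
  have hden2 : e ^ 2 ≤ |D₁ * D₂| := by
    rw [abs_of_pos (by positivity)]
    calc e ^ 2 = e * e := sq e
      _ ≤ D₁ * D₂ := mul_le_mul hD₁lb hD₂lb he.le (by linarith)
  calc |w₁ * D₂ - D₁ * w₂| / |D₁ * D₂|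
      ≤ (4 * Rm ^ 3 / e ^ 2 * Δ + 2 * Δ) / e ^ 2 :=
        div_le_div₀ (by positivity) hnum2 (by positivity) hden2
    _ ≤ 6 * Rm ^ 3 / e ^ 4 * Δ := by
        have h1 : (4 * Rm ^ 3 / e ^ 2 * Δ + 2 * Δ) / e ^ 2
            = 4 * Rm ^ 3 * Δ / e ^ 4 + 2 * Δ / e ^ 2 := by ring
        have h2 : 2 * Δ / e ^ 2 ≤ 2 * Rm ^ 3 * Δ / e ^ 4 := by
          rw [div_le_div_iff₀ (by positivity) (by positivity)]
          have hee : e ^ 2 ≤ 1 := by nlinarith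
          have he2 : e ^ 4 ≤ e ^ 2 := by nlinarith [sq_nonneg e, sq_nonneg (e^2)]
          have hRm1 : (1:ℝ) ≤ Rm ^ 3 := by nlinarith
          nlinarith [mul_nonneg hΔ0 (sq_nonneg e)]
        have h3 : 6 * Rm ^ 3 / e ^ 4 * Δ = 4 * Rm ^ 3 * Δ / e ^ 4 + 2 * Rm ^ 3 * Δ / e ^ 4 := by
          ring
        linarith

/-- The linear strip capturing the support of the fanbeam weight. -/
def myStrip (RE R δ s β : ℝ) : Set (ℝ × ℝ) :=
  {x : ℝ × ℝ | |x.1 * (R * Real.cos β + s * Real.sin β)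
    + x.2 * (R * Real.sin β - s * Real.cos β) - s * RE| ≤ δ * (RE + 1)}

lemma my_strip_measurable (RE R δ s β : ℝ) : MeasurableSet (myStrip RE R δ s β) := by
  apply measurableSet_le _ measurable_const
  exact ((((measurable_fst.mul_const _).add (measurable_snd.mul_const _)).sub
    measurable_const).abs)

lemma my_strip_key (RE R s β : ℝ) (x : ℝ × ℝ) :
    x.1 * (R * Real.cos β + s * Real.sin β)
        + x.2 * (R * Real.sin β - s * Real.cos β) - s * RE
      = dot2 x (dirv β) * R - s * (dot2 x (dirp β) + RE) := by
  simp only [dot2, dirv, dirp]; ring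

lemma my_strip_mem {RE R e δ s β : ℝ} (he : 0 < e) (heRE : e ≤ RE - 1) (hδ : 0 < δ)
    {x : ℝ × ℝ} (hx : x ∈ unitDisk)
    (h : hatw δ (fanProj RE R x β - s) ≠ 0) : x ∈ myStrip RE R δ s β := by
  have hB := my_abs_dot2_dirp_le hx β
  have hD0 : 0 < dot2 x (dirp β) + RE := by have := (abs_le.1 hB).1; linarith
  have hDub : dot2 x (dirp β) + RE ≤ RE + 1 := by have := (abs_le.1 hB).2; linarith
  have h1 : |fanProj RE R x β - s| < δ := my_hatw_pos_of_ne h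
  show |_| ≤ δ * (RE + 1)
  rw [my_strip_key]
  have e1 : dot2 x (dirv β) * R - s * (dot2 x (dirp β) + RE)
      = (fanProj RE R x β - s) * (dot2 x (dirp β) + RE) := by
    simp only [fanProj]; field_simp
  rw [e1, abs_mul, abs_of_pos hD0]
  exact mul_le_mul h1.le hDub hD0.le hδ.le

lemma my_strip_overlap {RE R e δ s s' β : ℝ} (he : 0 < e) (heRE : e ≤ RE - 1)
    {x : ℝ × ℝ} (hx : x ∈ unitDisk) (h1 : x ∈ myStrip RE R δ s β)
    (h2 : x ∈ myStrip RE R δ s' β) : |s - s'| ≤ 2 * δ * (RE + 1) / e := by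
  have hB := my_abs_dot2_dirp_le hx β
  have hD : e ≤ dot2 x (dirp β) + RE := by have := (abs_le.1 hB).1; linarith
  set D := dot2 x (dirp β) + RE with hDdef
  set A := dot2 x (dirv β) with hAdef
  have k1 : |A * R - s * D| ≤ δ * (RE + 1) := by
    have := my_strip_key RE R s β x
    simp only [← hDdef, ← hAdef] at this
    rw [← this]; exact h1
  have k2 : |A * R - s' * D| ≤ δ * (RE + 1) := by
    have := my_strip_key RE R s' β x
    simp only [← hDdef, ← hAdef] at this
    rw [← this]; exact h2
  have k3 : |s - s'| * D ≤ 2 * δ * (RE + 1) := by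
    have e1 : (s - s') * D = (A * R - s' * D) - (A * R - s * D) := by ring
    calc |s - s'| * D = |(s - s') * D| := by
          rw [abs_mul, abs_of_pos (by linarith : (0:ℝ) < D)]
      _ = |(A * R - s' * D) - (A * R - s * D)| := by rw [e1]
      _ ≤ |A * R - s' * D| + |A * R - s * D| := abs_sub _ _
      _ ≤ 2 * δ * (RE + 1) := by linarith
  rw [le_div_iff₀ he]
  calc |s - s'| * e ≤ |s - s'| * D := by
        apply mul_le_mul_of_nonneg_left hD (abs_nonneg _)
    _ ≤ 2 * δ * (RE + 1) := k3

lemma my_slab_vol {v₁ v₂ c w : ℝ} (hw : 0 ≤ w) (hv : 0 < max |v₁| |v₂|) :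
    volume {x : ℝ × ℝ | |x.1 * v₁ + x.2 * v₂ - c| ≤ w ∧ |x.1| ≤ 1 ∧ |x.2| ≤ 1}
      ≤ ENNReal.ofReal (2 * (2 * w / max |v₁| |v₂|)) := by
  set S := {x : ℝ × ℝ | |x.1 * v₁ + x.2 * v₂ - c| ≤ w ∧ |x.1| ≤ 1 ∧ |x.2| ≤ 1} with hSdef
  have hSm : MeasurableSet S := by
    apply MeasurableSet.inter
    · exact measurableSet_le ((((measurable_fst.mul_const _).add
        (measurable_snd.mul_const _)).sub measurable_const).abs) measurable_const
    · exact MeasurableSet.inter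
        (measurableSet_le measurable_fst.abs measurable_const)
        (measurableSet_le measurable_snd.abs measurable_const)
  rcases max_cases |v₁| |v₂| with ⟨hmaxeq, _⟩ | ⟨hmaxeq, _⟩
  · have hv₁ : 0 < |v₁| := by rw [hmaxeq] at hv; exact hv
    have hv₁0 : v₁ ≠ 0 := by simpa [abs_pos] using hv₁
    have key : volume S = ∫⁻ x₂, volume ((fun x₁ => ((x₁, x₂) : ℝ × ℝ)) ⁻¹' S) := by
      rw [MeasureTheory.Measure.volume_eq_prod, MeasureTheory.Measure.prod_apply_symm hSm]
    rw [key]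
    have hb : ∀ x₂ : ℝ, volume ((fun x₁ => ((x₁, x₂) : ℝ × ℝ)) ⁻¹' S)
        ≤ (Icc (-1:ℝ) 1).indicator (fun _ => ENNReal.ofReal (2 * (w / |v₁|))) x₂ := by
      intro x₂
      by_cases hx₂ : |x₂| ≤ 1
      · rw [Set.indicator_of_mem (by rw [mem_Icc, ← abs_le]; exact hx₂)]
        have hsub : ((fun x₁ => ((x₁, x₂) : ℝ × ℝ)) ⁻¹' S)
            ⊆ Metric.closedBall ((c - x₂ * v₂) / v₁) (w / |v₁|) := by
          intro x₁ hx₁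
          obtain ⟨ha, -, -⟩ := hx₁
          rw [Metric.mem_closedBall, Real.dist_eq, le_div_iff₀ hv₁]
          have e2 : |x₁ - (c - x₂ * v₂) / v₁| * |v₁| = |x₁ * v₁ + x₂ * v₂ - c| := by
            rw [← abs_mul]; congr 1; field_simp; ring
          rw [e2]; exact ha
        calc volume ((fun x₁ => ((x₁, x₂) : ℝ × ℝ)) ⁻¹' S)
            ≤ volume (Metric.closedBall ((c - x₂ * v₂) / v₁) (w / |v₁|)) :=
              measure_mono hsub
          _ = ENNReal.ofReal (2 * (w / |v₁|)) := by rw [Real.volume_closedBall]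
      · have he : ((fun x₁ => ((x₁, x₂) : ℝ × ℝ)) ⁻¹' S) = ∅ := by
          ext x₁
          simp only [Set.mem_preimage, hSdef, Set.mem_setOf_eq, Set.mem_empty_iff_false,
            iff_false, not_and]
          intro _ _; exact hx₂
        rw [he]; simp
    calc ∫⁻ x₂, volume ((fun x₁ => ((x₁, x₂) : ℝ × ℝ)) ⁻¹' S)
        ≤ ∫⁻ x₂, (Icc (-1:ℝ) 1).indicator (fun _ => ENNReal.ofReal (2 * (w / |v₁|))) x₂ :=
          lintegral_mono hb
      _ = ENNReal.ofReal (2 * (w / |v₁|)) * volume (Icc (-1:ℝ) 1) := by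
          rw [MeasureTheory.lintegral_indicator measurableSet_Icc,
            MeasureTheory.setLIntegral_const]
      _ = ENNReal.ofReal (2 * (w / |v₁|)) * ENNReal.ofReal 2 := by
          rw [Real.volume_Icc]; norm_num
      _ = ENNReal.ofReal (2 * (2 * w / |v₁|)) := by
          rw [← ENNReal.ofReal_mul (by positivity)]; congr 1; ring
      _ ≤ ENNReal.ofReal (2 * (2 * w / max |v₁| |v₂|)) := by rw [hmaxeq]
  · have hv₂ : 0 < |v₂| := by rw [hmaxeq] at hv; exact hv
    have hv₂0 : v₂ ≠ 0 := by simpa [abs_pos] using hv₂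
    have key : volume S = ∫⁻ x₁, volume (Prod.mk x₁ ⁻¹' S) := by
      rw [MeasureTheory.Measure.volume_eq_prod, MeasureTheory.Measure.prod_apply hSm]
    rw [key]
    have hb : ∀ x₁ : ℝ, volume (Prod.mk x₁ ⁻¹' S)
        ≤ (Icc (-1:ℝ) 1).indicator (fun _ => ENNReal.ofReal (2 * (w / |v₂|))) x₁ := by
      intro x₁
      by_cases hx₁ : |x₁| ≤ 1
      · rw [Set.indicator_of_mem (by rw [mem_Icc, ← abs_le]; exact hx₁)]
        have hsub : (Prod.mk x₁ ⁻¹' S)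
            ⊆ Metric.closedBall ((c - x₁ * v₁) / v₂) (w / |v₂|) := by
          intro x₂ hx₂
          obtain ⟨ha, -, -⟩ := hx₂
          rw [Metric.mem_closedBall, Real.dist_eq, le_div_iff₀ hv₂]
          have e2 : |x₂ - (c - x₁ * v₁) / v₂| * |v₂| = |x₁ * v₁ + x₂ * v₂ - c| := by
            rw [← abs_mul]; congr 1; field_simp; ring
          rw [e2]; exact ha
        calc volume (Prod.mk x₁ ⁻¹' S)
            ≤ volume (Metric.closedBall ((c - x₁ * v₁) / v₂) (w / |v₂|)) :=
              measure_mono hsub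
          _ = ENNReal.ofReal (2 * (w / |v₂|)) := by rw [Real.volume_closedBall]
      · have he : (Prod.mk x₁ ⁻¹' S) = ∅ := by
          ext x₂
          simp only [Set.mem_preimage, hSdef, Set.mem_setOf_eq, Set.mem_empty_iff_false,
            iff_false, not_and]
          intro _ h2; exact absurd h2 hx₁
        rw [he]; simp
    calc ∫⁻ x₁, volume (Prod.mk x₁ ⁻¹' S)
        ≤ ∫⁻ x₁, (Icc (-1:ℝ) 1).indicator (fun _ => ENNReal.ofReal (2 * (w / |v₂|))) x₁ :=
          lintegral_mono hb
      _ = ENNReal.ofReal (2 * (w / |v₂|)) * volume (Icc (-1:ℝ) 1) := by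
          rw [MeasureTheory.lintegral_indicator measurableSet_Icc,
            MeasureTheory.setLIntegral_const]
      _ = ENNReal.ofReal (2 * (w / |v₂|)) * ENNReal.ofReal 2 := by
          rw [Real.volume_Icc]; norm_num
      _ = ENNReal.ofReal (2 * (2 * w / |v₂|)) := by
          rw [← ENNReal.ofReal_mul (by positivity)]; congr 1; ring
      _ ≤ ENNReal.ofReal (2 * (2 * w / max |v₁| |v₂|)) := by rw [hmaxeq]

lemma my_strip_vol {RE R e δ s β : ℝ} (he : 0 < e) (heRE : e ≤ RE - 1)
    (hRER : RE + 1 ≤ R) (hδ : 0 < δ) :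
    volume (myStrip RE R δ s β ∩ unitDisk) ≤ ENNReal.ofReal (8 * δ) := by
  set v₁ := R * Real.cos β + s * Real.sin β with hv₁def
  set v₂ := R * Real.sin β - s * Real.cos β with hv₂def
  have hsc := Real.sin_sq_add_cos_sq β
  have hvv : v₁ ^ 2 + v₂ ^ 2 = R ^ 2 + s ^ 2 := by
    simp only [hv₁def, hv₂def]; linear_combination (R ^ 2 + s ^ 2) * hsc
  have hR0 : (0:ℝ) < R := by linarith
  have hmax : R / 2 ≤ max |v₁| |v₂| := by
    by_contra hc
    push_neg at hc
    have h1 : |v₁| < R / 2 := lt_of_le_of_lt (le_max_left _ _) hc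
    have h2 : |v₂| < R / 2 := lt_of_le_of_lt (le_max_right _ _) hc
    nlinarith [sq_abs v₁, sq_abs v₂, abs_nonneg v₁, abs_nonneg v₂, sq_nonneg s]
  have hmax0 : 0 < max |v₁| |v₂| := lt_of_lt_of_le (by linarith) hmax
  have hsub : myStrip RE R δ s β ∩ unitDisk
      ⊆ {x : ℝ × ℝ | |x.1 * v₁ + x.2 * v₂ - s * RE| ≤ δ * (RE + 1) ∧ |x.1| ≤ 1 ∧ |x.2| ≤ 1} := by
    rintro x ⟨h1, h2⟩
    obtain ⟨ha, hb⟩ := my_abs_le_one_of_disk h2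
    exact ⟨h1, ha, hb⟩
  calc volume (myStrip RE R δ s β ∩ unitDisk)
      ≤ volume {x : ℝ × ℝ | |x.1 * v₁ + x.2 * v₂ - s * RE| ≤ δ * (RE + 1)
          ∧ |x.1| ≤ 1 ∧ |x.2| ≤ 1} := measure_mono hsub
    _ ≤ ENNReal.ofReal (2 * (2 * (δ * (RE + 1)) / max |v₁| |v₂|)) :=
        my_slab_vol (by nlinarith) hmax0
    _ ≤ ENNReal.ofReal (8 * δ) := by
        apply ENNReal.ofReal_le_ofReal
        have hstep : 2 * (2 * (δ * (RE + 1)) / max |v₁| |v₂|)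
            ≤ 2 * (2 * (δ * (RE + 1)) / (R / 2)) := by
          have h0 : 0 < R / 2 := by linarith
          have h1 : (0:ℝ) ≤ 2 * (δ * (RE + 1)) := by nlinarith
          gcongr
        have hstep2 : 2 * (2 * (δ * (RE + 1)) / (R / 2)) = 8 * δ * ((RE + 1) / R) := by
          field_simp; ring
        have hstep3 : 8 * δ * ((RE + 1) / R) ≤ 8 * δ * 1 := by
          apply mul_le_mul_of_nonneg_left _ (by positivity)
          rw [div_le_one hR0]; exact hRER
        linarith

lemma my_count {X : Type*} (P : ℕ) (S : ℕ → Set X) (x : X) (r : ℝ) (hr : 0 ≤ r)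
    (h : ∀ p ∈ Finset.Icc 1 P, ∀ p' ∈ Finset.Icc 1 P, x ∈ S p → x ∈ S p' →
      |(p : ℝ) - (p' : ℝ)| ≤ r) :
    ∑ p ∈ Finset.Icc 1 P, Set.indicator (S p) (fun _ => (1:ℝ)) x ≤ r + 1 := by
  classical
  set T := (Finset.Icc 1 P).filter (fun p => x ∈ S p) with hT
  have hsum : ∑ p ∈ Finset.Icc 1 P, Set.indicator (S p) (fun _ => (1:ℝ)) x = (T.card : ℝ) := by
    rw [hT, Finset.card_filter]
    push_cast
    apply Finset.sum_congr rfl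
    intro p _
    by_cases hp : x ∈ S p <;> simp [Set.indicator_apply, hp]
  rw [hsum]
  by_cases hne : T.Nonempty
  · set p₀ := T.min' hne with hp₀
    have hp₀T : p₀ ∈ T := T.min'_mem hne
    have hp₀I : p₀ ∈ Finset.Icc 1 P := (Finset.mem_filter.1 hp₀T).1
    have hp₀S : x ∈ S p₀ := (Finset.mem_filter.1 hp₀T).2
    have hsub : T ⊆ Finset.Icc p₀ (p₀ + ⌊r⌋₊) := by
      intro p hp
      have hpI : p ∈ Finset.Icc 1 P := (Finset.mem_filter.1 hp).1
      have hpS : x ∈ S p := (Finset.mem_filter.1 hp).2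
      have hge : p₀ ≤ p := T.min'_le p hp
      have habs : |(p:ℝ) - (p₀:ℝ)| ≤ r := h p hpI p₀ hp₀I hpS hp₀S
      have hle : ((p - p₀ : ℕ) : ℝ) ≤ r := by
        rw [Nat.cast_sub hge]
        calc ((p:ℝ) - p₀) ≤ |(p:ℝ) - (p₀:ℝ)| := le_abs_self _
          _ ≤ r := habs
      have : p - p₀ ≤ ⌊r⌋₊ := Nat.le_floor hle
      rw [Finset.mem_Icc]
      omega
    have hcard : T.card ≤ ⌊r⌋₊ + 1 := by
      calc T.card ≤ (Finset.Icc p₀ (p₀ + ⌊r⌋₊)).card := Finset.card_le_card hsub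
        _ = ⌊r⌋₊ + 1 := by rw [Nat.card_Icc]; omega
    calc (T.card : ℝ) ≤ (⌊r⌋₊ : ℝ) + 1 := by exact_mod_cast hcard
      _ ≤ r + 1 := by have := Nat.floor_le hr; linarith
  · rw [Finset.not_nonempty_iff_eq_empty.1 hne]
    simp
    linarith

lemma my_sq_sum_indicator {F : Finset ℕ} {S : ℕ → Set ℝ}
    (hdisj : ∀ p ∈ F, ∀ p' ∈ F, p ≠ p' → Disjoint (S p) (S p'))
    (b M : ℕ → ℝ) (hb : ∀ p ∈ F, |b p| ≤ M p) (ξ : ℝ) (a : ℝ) :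
    (a * ∑ p ∈ F, Set.indicator (S p) (fun _ => (1:ℝ)) ξ * b p) ^ 2
      ≤ a ^ 2 * ∑ p ∈ F, Set.indicator (S p) (fun _ => (1:ℝ)) ξ * M p ^ 2 := by
  classical
  by_cases hex : ∃ p₀ ∈ F, ξ ∈ S p₀
  · obtain ⟨p₀, hp₀F, hp₀⟩ := hex
    have hz : ∀ p ∈ F, p ≠ p₀ → ξ ∉ S p := fun p hp hne hmem =>
      (Set.disjoint_left.mp (hdisj p hp p₀ hp₀F hne)) hmem hp₀
    have h1 : ∑ p ∈ F, Set.indicator (S p) (fun _ => (1:ℝ)) ξ * b p = b p₀ := by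
      rw [Finset.sum_eq_single_of_mem p₀ hp₀F]
      · rw [Set.indicator_of_mem hp₀, one_mul]
      · intro p hp hne
        rw [Set.indicator_of_notMem (hz p hp hne), zero_mul]
    have h2 : ∑ p ∈ F, Set.indicator (S p) (fun _ => (1:ℝ)) ξ * M p ^ 2 = M p₀ ^ 2 := by
      rw [Finset.sum_eq_single_of_mem p₀ hp₀F]
      · rw [Set.indicator_of_mem hp₀, one_mul]
      · intro p hp hne
        rw [Set.indicator_of_notMem (hz p hp hne), zero_mul]
    rw [h1, h2, mul_pow]
    apply mul_le_mul_of_nonneg_left _ (sq_nonneg a)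
    calc (b p₀) ^ 2 = |b p₀| ^ 2 := (sq_abs _).symm
      _ ≤ M p₀ ^ 2 := pow_le_pow_left₀ (abs_nonneg _) (hb p₀ hp₀F) 2
  · push_neg at hex
    have h1 : ∑ p ∈ F, Set.indicator (S p) (fun _ => (1:ℝ)) ξ * b p = 0 :=
      Finset.sum_eq_zero fun p hp => by rw [Set.indicator_of_notMem (hex p hp), zero_mul]
    have h2 : ∑ p ∈ F, Set.indicator (S p) (fun _ => (1:ℝ)) ξ * M p ^ 2 = 0 :=
      Finset.sum_eq_zero fun p hp => by rw [Set.indicator_of_notMem (hex p hp), zero_mul]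
    rw [h1, h2]
    simp

lemma my_CS {f : ℝ × ℝ → ℝ} (hf : MemLp f 2 (volume : Measure (ℝ × ℝ))) {s : Set (ℝ × ℝ)}
    (hfin : volume s ≠ ⊤) :
    (∫ x in s, |f x|) ^ 2 ≤ (volume s).toReal * ∫ x in s, f x ^ 2 := by
  haveI : IsFiniteMeasure (volume.restrict s) :=
    ⟨by rw [Measure.restrict_apply_univ]; exact lt_top_iff_ne_top.2 hfin⟩
  have h2 : Real.HolderConjugate 2 2 := Real.holderConjugate_iff.mpr ⟨one_lt_two, by norm_num⟩
  have hofr : ENNReal.ofReal (2:ℝ) = 2 := by norm_num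
  have hmem1 : MemLp (fun _ : ℝ × ℝ => (1:ℝ)) (ENNReal.ofReal 2) (volume.restrict s) := by
    rw [hofr]; exact memLp_const 1
  have hmemf : MemLp (fun x => |f x|) (ENNReal.ofReal 2) (volume.restrict s) := by
    rw [hofr]
    have := (hf.restrict s).norm
    simpa [Real.norm_eq_abs] using this
  have key := MeasureTheory.integral_mul_le_Lp_mul_Lq_of_nonneg h2
    (ae_of_all _ fun _ => zero_le_one)
    (ae_of_all _ fun x => abs_nonneg (f x)) hmem1 hmemf
  simp only [one_mul, Real.one_rpow] at key
  have hG : ∫ x in s, |f x| ^ (2:ℝ) = ∫ x in s, f x ^ 2 := by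
    apply integral_congr_ae
    apply ae_of_all
    intro x
    show |f x| ^ (2:ℝ) = f x ^ 2
    rw [show (2:ℝ) = ((2:ℕ):ℝ) by norm_num, Real.rpow_natCast, sq_abs]
  have hm : ∫ _ in s, (1:ℝ) = (volume s).toReal := by
    rw [integral_const, smul_eq_mul, mul_one, Measure.real, Measure.restrict_apply_univ]
  rw [hG, hm] at key
  have hmnn : 0 ≤ (volume s).toReal := ENNReal.toReal_nonneg
  have hGnn : 0 ≤ ∫ x in s, f x ^ 2 := integral_nonneg fun x => sq_nonneg _
  have hnn : 0 ≤ ∫ x in s, |f x| := integral_nonneg fun x => abs_nonneg _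
  calc (∫ x in s, |f x|) ^ 2
      ≤ ((volume s).toReal ^ (1/(2:ℝ)) * (∫ x in s, f x ^ 2) ^ (1/(2:ℝ))) ^ 2 :=
        pow_le_pow_left₀ hnn key 2
    _ = (Real.sqrt ((volume s).toReal) * Real.sqrt (∫ x in s, f x ^ 2)) ^ 2 := by
        rw [← Real.sqrt_eq_rpow, ← Real.sqrt_eq_rpow]
    _ = (volume s).toReal * ∫ x in s, f x ^ 2 := by
        rw [mul_pow, Real.sq_sqrt hmnn, Real.sq_sqrt hGnn]

lemma my_partition {Q : ℕ} {φs : ℕ → ℝ} (hg : AngGrid Q φs) {δα : ℝ}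
    (hgap : GapLe Q φs δα) (α : ℝ) :
    ∃ q ∈ Finset.Icc 1 Q, ∃ k : ℤ,
      α ∈ angCell φs q ∧ (∀ q' ∈ Finset.Icc 1 Q, q' ≠ q → α ∉ angCell φs q') ∧
      |φs q - (α + 2 * π * (k : ℝ))| ≤ δα := by
  classical
  have hπ := Real.pi_pos
  set m : ℕ → ℝ := fun q => (φs (q - 1) + φs q) / 2 with hmdef
  have hA : ∀ q, 1 ≤ q → q ≤ Q → φs (q - 1) ≤ φs q := by
    intro q h1 h2
    rcases Nat.lt_or_ge 1 q with hq | hq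
    · have := hg.mono (q - 1) (by omega) (by omega)
      rw [Nat.sub_add_cancel h1] at this
      exact this.le
    · have hq1 : q = 1 := le_antisymm hq h1
      subst hq1
      simp only [Nat.sub_self]
      rw [hg.wrap0]
      have h1' := (hg.mem 1 le_rfl hg.one_le).1
      have h2' := (hg.mem Q hg.one_le le_rfl).2
      linarith
  have hB : ∀ q, 1 ≤ q → q ≤ Q → φs q ≤ φs (q + 1) := by
    intro q h1 h2
    rcases Nat.lt_or_ge q Q with hq | hq
    · exact (hg.mono q h1 hq).le
    · have hqQ : q = Q := le_antisymm h2 hq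
      rw [hqQ, hg.wrapQ]
      have h1' := (hg.mem 1 le_rfl hg.one_le).1
      have h2' := (hg.mem Q hg.one_le le_rfl).2
      linarith
  have hstep : ∀ q, 1 ≤ q → q ≤ Q → m q ≤ m (q + 1) := by
    intro q h1 h2
    have e1 : m (q + 1) = (φs q + φs (q + 1)) / 2 := by
      simp only [hmdef, Nat.add_sub_cancel]
    have := hA q h1 h2
    have := hB q h1 h2
    simp only [hmdef] at *
    rw [e1]
    linarith
  have hmono : ∀ q₁, 1 ≤ q₁ → ∀ q₂, q₁ ≤ q₂ → q₂ ≤ Q + 1 → m q₁ ≤ m q₂ := by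
    intro q₁ h1 q₂ h12 h2
    induction q₂, h12 using Nat.le_induction with
    | base => exact le_rfl
    | succ n hn ih =>
      calc m q₁ ≤ m n := ih (by omega)
        _ ≤ m (n + 1) := hstep n (by omega) (by omega)
  have hm1 : m (Q + 1) = m 1 + 2 * π := by
    have e1 : m (Q + 1) = (φs Q + φs (Q + 1)) / 2 := by
      simp only [hmdef, Nat.add_sub_cancel]
    have e2 : m 1 = (φs 0 + φs 1) / 2 := by simp only [hmdef]
    rw [e1, e2, hg.wrapQ, hg.wrap0]; ring
  have h2π : (0:ℝ) < 2 * π := by linarith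
  set k : ℤ := ⌈(m 1 - α) / (2 * π)⌉ with hkdef
  set β : ℝ := α + 2 * π * (k : ℝ) with hβdef
  have hβ1 : m 1 ≤ β := by
    have h := Int.le_ceil ((m 1 - α) / (2 * π))
    rw [div_le_iff₀ h2π] at h
    simp only [hβdef, hkdef]
    linarith
  have hβ2 : β < m 1 + 2 * π := by
    have h := Int.ceil_lt_add_one ((m 1 - α) / (2 * π))
    have h' := mul_lt_mul_of_pos_right h h2π
    rw [add_mul, div_mul_cancel₀ _ (ne_of_gt h2π), one_mul] at h'
    simp only [hβdef, hkdef]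
    linarith
  set T := (Finset.Icc 1 Q).filter (fun q => m q ≤ β) with hTdef
  have hT1 : 1 ∈ T :=
    Finset.mem_filter.2 ⟨Finset.mem_Icc.2 ⟨le_rfl, hg.one_le⟩, hβ1⟩
  have hTne : T.Nonempty := ⟨1, hT1⟩
  set q₀ := T.max' hTne with hq₀def
  have hq₀T : q₀ ∈ T := T.max'_mem hTne
  have hq₀I : q₀ ∈ Finset.Icc 1 Q := (Finset.mem_filter.1 hq₀T).1
  have hq₀le : m q₀ ≤ β := (Finset.mem_filter.1 hq₀T).2
  have hq₀1 : 1 ≤ q₀ := (Finset.mem_Icc.1 hq₀I).1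
  have hq₀Q : q₀ ≤ Q := (Finset.mem_Icc.1 hq₀I).2
  have hub : β < m (q₀ + 1) := by
    by_cases hq : q₀ = Q
    · rw [hq, hm1]; exact hβ2
    · have hlt : q₀ + 1 ≤ Q := by omega
      by_contra hc
      push_neg at hc
      have hmem : q₀ + 1 ∈ T :=
        Finset.mem_filter.2 ⟨Finset.mem_Icc.2 ⟨by omega, hlt⟩, hc⟩
      have := T.le_max' _ hmem
      omega
  have hcell : ∀ q, 1 ≤ q → (φs (q - 1) + φs q) / 2 = m q := by
    intro q _; simp only [hmdef]
  have hcell2 : ∀ q, (φs q + φs (q + 1)) / 2 = m (q + 1) := by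
    intro q; simp only [hmdef, Nat.add_sub_cancel]
  refine ⟨q₀, hq₀I, k, ?_, ?_, ?_⟩
  · exact ⟨k, by rw [mem_Ico, hcell q₀ hq₀1, hcell2 q₀]; exact ⟨hq₀le, hub⟩⟩
  · rintro q' hq'I hne ⟨k₂, hk₂⟩
    rw [mem_Ico, hcell q' (Finset.mem_Icc.1 hq'I).1, hcell2 q'] at hk₂
    set β₂ : ℝ := α + 2 * π * (k₂ : ℝ) with hβ₂def
    have h1' : 1 ≤ q' := (Finset.mem_Icc.1 hq'I).1
    have hQ' : q' ≤ Q := (Finset.mem_Icc.1 hq'I).2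
    have hb2low : m 1 ≤ β₂ := le_trans (hmono 1 le_rfl q' h1' (by omega)) hk₂.1
    have hb2high : β₂ < m 1 + 2 * π := by
      have := hmono (q' + 1) (by omega) (Q + 1) (by omega) le_rfl
      rw [hm1] at this
      exact lt_of_lt_of_le hk₂.2 this
    have hkk : k₂ = k := by
      have habs : |(k₂ : ℝ) - (k : ℝ)| < 1 := by
        rw [abs_lt]
        constructor <;> nlinarith [hβ1, hβ2, hb2low, hb2high]
      by_contra hne'
      have h0 : k₂ - k ≠ 0 := sub_ne_zero.2 hne'
      have h1'' : (1 : ℤ) ≤ |k₂ - k| := Int.one_le_abs h0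
      have : (1 : ℝ) ≤ |(k₂ : ℝ) - (k : ℝ)| := by exact_mod_cast h1''
      linarith
    have hββ : β₂ = β := by rw [hβ₂def, hβdef, hkk]
    rw [hββ] at hk₂
    rcases lt_or_gt_of_ne hne with hlt | hgt
    · have : m (q' + 1) ≤ m q₀ := hmono (q' + 1) (by omega) q₀ (by omega) (by omega)
      linarith [hk₂.2, hq₀le]
    · have hq'T : q' ∈ T := Finset.mem_filter.2 ⟨hq'I, hk₂.1⟩
      have := T.le_max' _ hq'T
      omega
  · have hφ1 : m q₀ ≤ φs q₀ := by
      have := hA q₀ hq₀1 hq₀Q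
      simp only [hmdef]
      linarith
    have hφ2 : φs q₀ ≤ m (q₀ + 1) := by
      have := hB q₀ hq₀1 hq₀Q
      rw [← hcell2 q₀]
      linarith
    have hw1 : φs (q₀ + 1) - φs q₀ ≤ δα := hgap q₀ hq₀1 hq₀Q
    have hw2 : φs q₀ - φs (q₀ - 1) ≤ δα := by
      rcases Nat.lt_or_ge 1 q₀ with hq | hq
      · have := hgap (q₀ - 1) (by omega) (by omega)
        rw [Nat.sub_add_cancel hq₀1] at this
        exact this
      · have hq1 : q₀ = 1 := by omega
        rw [hq1]
        simp only [Nat.sub_self]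
        have := hgap Q hg.one_le le_rfl
        rw [hg.wrapQ] at this
        rw [hg.wrap0]
        linarith
    have hwidth : m (q₀ + 1) - m q₀ ≤ δα := by
      rw [← hcell2 q₀, ← hcell q₀ hq₀1]
      linarith
    rw [abs_le]
    constructor
    · linarith [hub]
    · linarith [hq₀le, hφ1, hφ2]

end AuxLemmas

set_option maxHeartbeats 4000000

/-- for `0 < δ_ξ ≤ 1`, `‖G_{δ_ξ,δ_α} − G_{δ_ξ}‖ ≤ c δ_α/δ_ξ`, with `c`
independent of `δ_ξ`, `δ_α`, and bounded for `R` bounded, `R_E` bounded away from `1`. -/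
theorem gfan_angular_discretization :
    ∀ ε Rmax : ℝ, 0 < ε →
      ∃ c : ℝ, 0 < c ∧ ∀ RE R : ℝ, 1 + ε ≤ RE → RE + 1 < R → R ≤ Rmax →
        ∀ P : ℕ, 1 ≤ P → Wfan RE R / P ≤ 1 →
        ∀ (Q : ℕ) (αs : ℕ → ℝ) (δα : ℝ), AngGrid Q αs → 0 < δα → GapLe Q αs δα →
        ∀ f : ℝ × ℝ → ℝ, SuppDisk f → L2Img f →
          nSinoW RE R (fun ξ α => GFanSA RE R P Q αs f ξ α - GFanS RE R P f ξ α) ≤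
            c * (δα / (Wfan RE R / P)) * nImg f := by
  intro ε Rmax hε
  set e : ℝ := min ε 1 with hedef
  set Rm : ℝ := max Rmax 3 with hRmdef
  have he0 : 0 < e := lt_min hε one_pos
  have he1 : e ≤ 1 := min_le_right _ _
  have hRm3 : (3:ℝ) ≤ Rm := le_max_right _ _
  set K2 : ℝ := 6 * Rm ^ 3 / e ^ 4 with hK2def
  set Kov : ℝ := 2 * Rm / e + 1 with hKovdef
  set C0 : ℝ := 32 * K2 ^ 2 * Kov with hC0def
  have hRm0 : (0:ℝ) < Rm := by linarith
  have hK20 : 0 < K2 := div_pos (by nlinarith [pow_pos hRm0 3]) (by positivity)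
  have hKov0 : 0 < Kov := by
    have h : 0 < 2 * Rm / e := div_pos (by nlinarith) he0
    rw [hKovdef]
    linarith
  have hC00 : 0 < C0 := by
    rw [hC0def]
    exact mul_pos (mul_pos (by norm_num) (pow_pos hK20 2)) hKov0
  refine ⟨Real.sqrt (8 * C0), Real.sqrt_pos.2 (by linarith), ?_⟩
  intro RE R hRE hRER hRmax P hP hδξ1 Q αs δα hgrid hδα hgap f hsupp hfL2
  -- basic facts
  have heRE : e ≤ RE - 1 := le_trans (min_le_left _ _) (by linarith)
  have hR2 : (2:ℝ) < R := by linarith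
  have hR0 : (0:ℝ) < R := by linarith
  have hRRm : R ≤ Rm := le_trans hRmax (le_max_left _ _)
  have hRER' : RE + 1 ≤ R := hRER.le
  have hW0 : 0 < Wfan RE R := by
    rw [Wfan]
    exact div_pos (by linarith) (Real.sqrt_pos.2 (by nlinarith))
  have hP0 : (0:ℝ) < (P:ℝ) := by exact_mod_cast Nat.lt_of_lt_of_le Nat.zero_lt_one hP
  set δξ : ℝ := Wfan RE R / (P:ℝ) with hδξdef
  have hδξ0 : 0 < δξ := div_pos hW0 hP0
  -- facts about f
  have hf2 : MemLp f 2 (volume : Measure (ℝ × ℝ)) := hfL2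
  set F : ℝ := ∫ x : ℝ × ℝ, f x ^ 2 with hFdef
  have hF0 : 0 ≤ F := integral_nonneg fun x => sq_nonneg _
  have hsqInt : Integrable (fun x => f x ^ 2) (volume : Measure (ℝ × ℝ)) := hf2.integrable_sq
  have hΩm : MeasurableSet unitDisk :=
    measurableSet_lt ((measurable_fst.pow_const 2).add (measurable_snd.pow_const 2))
      measurable_const
  have hΩsub : unitDisk ⊆ Metric.closedBall (0 : ℝ × ℝ) 1 := by
    intro x hx
    obtain ⟨h1, h2⟩ := my_abs_le_one_of_disk hx
    rw [Metric.mem_closedBall, Prod.dist_eq]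
    have e1 : dist x.1 (0 : ℝ × ℝ).1 = |x.1| := by rw [Real.dist_eq]; norm_num
    have e2 : dist x.2 (0 : ℝ × ℝ).2 = |x.2| := by rw [Real.dist_eq]; norm_num
    rw [e1, e2]
    exact max_le h1 h2
  have hΩlt : volume unitDisk < ⊤ :=
    lt_of_le_of_lt (measure_mono hΩsub) (isCompact_closedBall _ _).measure_lt_top
  haveI hfinΩ : IsFiniteMeasure (volume.restrict unitDisk) :=
    ⟨by rw [Measure.restrict_apply_univ]; exact hΩlt⟩
  have hfi : Integrable f (volume.restrict unitDisk) := (hf2.restrict _).integrable one_le_two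
  have habs : Integrable (fun x => |f x|) (volume.restrict unitDisk) := hfi.abs
  have hsqΩ : Integrable (fun x => f x ^ 2) (volume.restrict unitDisk) := hsqInt.restrict
  -- kernel measurability, boundedness, integrability
  have hker : ∀ γ s : ℝ, Measurable
      (fun x : ℝ × ℝ => hatw δξ (fanProj RE R x γ - s) / (dot2 x (dirp γ) + RE)) := by
    intro γ s
    have h1 : Measurable fun x : ℝ × ℝ => dot2 x (dirv γ) := by
      simp only [dot2]
      exact (measurable_fst.mul_const _).add (measurable_snd.mul_const _)
    have h2 : Measurable fun x : ℝ × ℝ => dot2 x (dirp γ) := by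
      simp only [dot2]
      exact (measurable_fst.mul_const _).add (measurable_snd.mul_const _)
    have h3 : Measurable fun x : ℝ × ℝ => fanProj RE R x γ := by
      simp only [fanProj]
      exact (h1.mul_const R).div (h2.add_const RE)
    have hcont : Continuous fun t : ℝ => hatw δξ t := by
      simp only [hatw]
      exact continuous_const.max (continuous_const.sub continuous_abs)
    exact (hcont.measurable.comp (h3.sub_const s)).div (h2.add_const RE)
  have hkerb : ∀ γ s : ℝ, ∀ x ∈ unitDisk,
      |hatw δξ (fanProj RE R x γ - s) / (dot2 x (dirp γ) + RE)| ≤ 1 / e := by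
    intro γ s x hx
    have hB := my_abs_dot2_dirp_le hx γ
    have hD0 : 0 < dot2 x (dirp γ) + RE := by have := (abs_le.1 hB).1; linarith
    have hDe : e ≤ dot2 x (dirp γ) + RE := by have := (abs_le.1 hB).1; linarith
    rw [abs_div, abs_of_nonneg (my_hatw_nonneg _ _), abs_of_pos hD0]
    exact div_le_div₀ zero_le_one ((my_hatw_le hδξ0.le _).trans hδξ1) he0 hDe
  have hkerInt : ∀ γ s : ℝ, Integrable
      (fun x => hatw δξ (fanProj RE R x γ - s) * f x / (dot2 x (dirp γ) + RE))
      (volume.restrict unitDisk) := by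
    intro γ s
    have heq : (fun x => hatw δξ (fanProj RE R x γ - s) * f x / (dot2 x (dirp γ) + RE))
        = fun x => (hatw δξ (fanProj RE R x γ - s) / (dot2 x (dirp γ) + RE)) * f x := by
      funext x; ring
    rw [heq]
    apply Integrable.bdd_mul (c := 1 / e) hfi ((hker γ s).aestronglyMeasurable)
    filter_upwards [ae_restrict_mem hΩm] with x hx
    rw [Real.norm_eq_abs]
    exact hkerb γ s x hx
  have hindInt : ∀ S : Set (ℝ × ℝ), MeasurableSet S →
      Integrable (fun x => S.indicator (fun _ => (1:ℝ)) x * |f x|) (volume.restrict unitDisk) := by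
    intro S hS
    apply Integrable.bdd_mul (c := 1) habs ((measurable_const.indicator hS).aestronglyMeasurable)
    apply ae_of_all
    intro x
    rw [Real.norm_eq_abs]
    by_cases hx : x ∈ S <;> simp [Set.indicator_apply, hx]
  have hindsqInt : ∀ S : Set (ℝ × ℝ), MeasurableSet S →
      Integrable (fun x => S.indicator (fun _ => (1:ℝ)) x * f x ^ 2)
        (volume.restrict unitDisk) := by
    intro S hS
    apply Integrable.bdd_mul (c := 1) hsqΩ ((measurable_const.indicator hS).aestronglyMeasurable)
    apply ae_of_all
    intro x
    rw [Real.norm_eq_abs]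
    by_cases hx : x ∈ S <;> simp [Set.indicator_apply, hx]
  -- strips
  have hstripm : ∀ (γ : ℝ) (p : ℕ), MeasurableSet (myStrip RE R δξ (sCen δξ P p) γ) :=
    fun γ p => my_strip_measurable _ _ _ _ _
  have hstripfin : ∀ (γ : ℝ) (p : ℕ),
      volume (myStrip RE R δξ (sCen δξ P p) γ ∩ unitDisk) ≠ ⊤ := by
    intro γ p
    exact ne_top_of_le_ne_top ENNReal.ofReal_ne_top (my_strip_vol he0 heRE hRER' hδξ0)
  have hstripvol : ∀ (γ : ℝ) (p : ℕ),
      (volume (myStrip RE R δξ (sCen δξ P p) γ ∩ unitDisk)).toReal ≤ 8 * δξ :=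
    fun γ p => ENNReal.toReal_le_of_le_ofReal (by positivity)
      (my_strip_vol he0 heRE hRER' hδξ0)
  -- indicator integral identity
  have hindid : ∀ (S : Set (ℝ × ℝ)), MeasurableSet S → ∀ g : ℝ × ℝ → ℝ,
      ∫ x in unitDisk, S.indicator (fun _ => (1:ℝ)) x * g x = ∫ x in S ∩ unitDisk, g x := by
    intro S hS g
    have heq : (fun x => S.indicator (fun _ => (1:ℝ)) x * g x) = S.indicator g := by
      funext x; by_cases hx : x ∈ S <;> simp [Set.indicator_apply, hx]
    rw [heq, integral_indicator hS, Measure.restrict_restrict hS]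
  have haterm : ∀ (γ : ℝ) (p : ℕ),
      (∫ x in unitDisk,
          (myStrip RE R δξ (sCen δξ P p) γ).indicator (fun _ => (1:ℝ)) x * |f x|) ^ 2
        ≤ 8 * δξ * ∫ x in unitDisk,
            (myStrip RE R δξ (sCen δξ P p) γ).indicator (fun _ => (1:ℝ)) x * f x ^ 2 := by
    intro γ p
    rw [hindid _ (hstripm γ p) (fun x => |f x|), hindid _ (hstripm γ p) (fun x => f x ^ 2)]
    calc (∫ x in myStrip RE R δξ (sCen δξ P p) γ ∩ unitDisk, |f x|) ^ 2
        ≤ (volume (myStrip RE R δξ (sCen δξ P p) γ ∩ unitDisk)).toReal *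
            ∫ x in myStrip RE R δξ (sCen δξ P p) γ ∩ unitDisk, f x ^ 2 :=
          my_CS hf2 (hstripfin γ p)
      _ ≤ 8 * δξ * ∫ x in myStrip RE R δξ (sCen δξ P p) γ ∩ unitDisk, f x ^ 2 :=
          mul_le_mul_of_nonneg_right (hstripvol γ p) (integral_nonneg fun x => sq_nonneg _)
  have hsum_ind : ∀ γ : ℝ,
      ∑ p ∈ Finset.Icc 1 P, ∫ x in unitDisk,
          (myStrip RE R δξ (sCen δξ P p) γ).indicator (fun _ => (1:ℝ)) x * f x ^ 2
        ≤ Kov * F := by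
    intro γ
    rw [← integral_finset_sum _ (fun p _ => hindsqInt _ (hstripm γ p))]
    have hmono : ∀ᵐ x ∂(volume.restrict unitDisk),
        (∑ p ∈ Finset.Icc 1 P,
          (myStrip RE R δξ (sCen δξ P p) γ).indicator (fun _ => (1:ℝ)) x * f x ^ 2)
          ≤ Kov * f x ^ 2 := by
      filter_upwards [ae_restrict_mem hΩm] with x hx
      have hr0 : (0:ℝ) ≤ 2 * Rm / e := div_nonneg (by nlinarith) he0.le
      have hcount : ∑ p ∈ Finset.Icc 1 P,
          Set.indicator (myStrip RE R δξ (sCen δξ P p) γ) (fun _ => (1:ℝ)) x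
            ≤ 2 * Rm / e + 1 := by
        apply my_count P _ x (2 * Rm / e) hr0
        intro p _ p' _ hxp hxp'
        have h1 := my_strip_overlap (e := e) he0 heRE hx hxp hxp'
        have h2 : sCen δξ P p - sCen δξ P p' = δξ * ((p:ℝ) - (p':ℝ)) := by
          simp only [sCen]; ring
        rw [h2, abs_mul, abs_of_pos hδξ0,
          show 2 * δξ * (RE + 1) / e = δξ * (2 * (RE + 1) / e) by ring] at h1
        have h4 : |(p:ℝ) - (p':ℝ)| ≤ 2 * (RE + 1) / e := (mul_le_mul_iff_right₀ hδξ0).mp h1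
        have h5 : RE + 1 ≤ Rm := le_trans hRER' hRRm
        calc |(p:ℝ) - (p':ℝ)| ≤ 2 * (RE + 1) / e := h4
          _ ≤ 2 * Rm / e := div_le_div₀ (by nlinarith) (by linarith) he0 le_rfl
      calc (∑ p ∈ Finset.Icc 1 P,
            (myStrip RE R δξ (sCen δξ P p) γ).indicator (fun _ => (1:ℝ)) x * f x ^ 2)
          = (∑ p ∈ Finset.Icc 1 P,
            (myStrip RE R δξ (sCen δξ P p) γ).indicator (fun _ => (1:ℝ)) x) * f x ^ 2 := by
            rw [Finset.sum_mul]
        _ ≤ Kov * f x ^ 2 := by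
            apply mul_le_mul_of_nonneg_right _ (sq_nonneg _)
            rw [hKovdef]
            exact hcount
    calc ∫ x in unitDisk, (∑ p ∈ Finset.Icc 1 P,
          (myStrip RE R δξ (sCen δξ P p) γ).indicator (fun _ => (1:ℝ)) x * f x ^ 2)
        ≤ ∫ x in unitDisk, Kov * f x ^ 2 :=
          integral_mono_ae (integrable_finset_sum _ fun p _ => hindsqInt _ (hstripm γ p))
            (hsqΩ.const_mul Kov) hmono
      _ = Kov * ∫ x in unitDisk, f x ^ 2 := integral_const_mul _ _
      _ ≤ Kov * F :=
          mul_le_mul_of_nonneg_left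
            (setIntegral_le_integral hsqInt (ae_of_all _ fun x => sq_nonneg _)) hKov0.le
  -- the J-difference bound
  have hJd : ∀ γ₁ γ₂ : ℝ, ∀ p : ℕ,
      |(∫ x in unitDisk,
          hatw δξ (fanProj RE R x γ₁ - sCen δξ P p) * f x / (dot2 x (dirp γ₁) + RE))
        - ∫ x in unitDisk,
            hatw δξ (fanProj RE R x γ₂ - sCen δξ P p) * f x / (dot2 x (dirp γ₂) + RE)|
      ≤ K2 * |γ₁ - γ₂| *
        ((∫ x in unitDisk,
            (myStrip RE R δξ (sCen δξ P p) γ₁).indicator (fun _ => (1:ℝ)) x * |f x|)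
          + ∫ x in unitDisk,
              (myStrip RE R δξ (sCen δξ P p) γ₂).indicator (fun _ => (1:ℝ)) x * |f x|) := by
    intro γ₁ γ₂ p
    set s := sCen δξ P p with hsdef
    have hInt1 := hkerInt γ₁ s
    have hInt2 := hkerInt γ₂ s
    rw [← integral_sub hInt1 hInt2]
    have hgInt : Integrable (fun x => K2 * |γ₁ - γ₂| *
        ((myStrip RE R δξ s γ₁).indicator (fun _ => (1:ℝ)) x * |f x|
          + (myStrip RE R δξ s γ₂).indicator (fun _ => (1:ℝ)) x * |f x|))
        (volume.restrict unitDisk) :=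
      ((hindInt _ (my_strip_measurable RE R δξ s γ₁)).add
        (hindInt _ (my_strip_measurable RE R δξ s γ₂))).const_mul _
    rw [← Real.norm_eq_abs]
    apply (norm_integral_le_of_norm_le hgInt ?_).trans (le_of_eq ?_)
    · filter_upwards [ae_restrict_mem hΩm] with x hx
      rw [Real.norm_eq_abs]
      have he1' : hatw δξ (fanProj RE R x γ₁ - s) * f x / (dot2 x (dirp γ₁) + RE)
          - hatw δξ (fanProj RE R x γ₂ - s) * f x / (dot2 x (dirp γ₂) + RE)
          = (hatw δξ (fanProj RE R x γ₁ - s) / (dot2 x (dirp γ₁) + RE)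
            - hatw δξ (fanProj RE R x γ₂ - s) / (dot2 x (dirp γ₂) + RE)) * f x := by
        ring
      rw [he1', abs_mul]
      have hind1nn : (0:ℝ) ≤ (myStrip RE R δξ s γ₁).indicator (fun _ => (1:ℝ)) x :=
        Set.indicator_nonneg (fun _ _ => zero_le_one) x
      have hind2nn : (0:ℝ) ≤ (myStrip RE R δξ s γ₂).indicator (fun _ => (1:ℝ)) x :=
        Set.indicator_nonneg (fun _ _ => zero_le_one) x
      by_cases hz : hatw δξ (fanProj RE R x γ₁ - s) = 0 ∧ hatw δξ (fanProj RE R x γ₂ - s) = 0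
      · rw [hz.1, hz.2]
        simp only [zero_div, sub_zero, abs_zero, zero_mul]
        apply mul_nonneg (mul_nonneg hK20.le (abs_nonneg _))
        apply add_nonneg (mul_nonneg hind1nn (abs_nonneg _)) (mul_nonneg hind2nn (abs_nonneg _))
      · have hin : (1:ℝ) ≤ (myStrip RE R δξ s γ₁).indicator (fun _ => (1:ℝ)) x
            + (myStrip RE R δξ s γ₂).indicator (fun _ => (1:ℝ)) x := by
          rcases not_and_or.mp hz with h | h
          · rw [Set.indicator_of_mem (my_strip_mem he0 heRE hδξ0 hx h)]
            linarith
          · rw [Set.indicator_of_mem (my_strip_mem he0 heRE hδξ0 hx h)]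
            linarith
        calc |hatw δξ (fanProj RE R x γ₁ - s) / (dot2 x (dirp γ₁) + RE)
              - hatw δξ (fanProj RE R x γ₂ - s) / (dot2 x (dirp γ₂) + RE)| * |f x|
            ≤ (K2 * |γ₁ - γ₂|) * |f x| :=
              mul_le_mul_of_nonneg_right
                (my_wD_lip he0 he1 heRE hRER' hRRm hδξ0 hδξ1 s hx γ₁ γ₂) (abs_nonneg _)
          _ ≤ K2 * |γ₁ - γ₂| *
              (((myStrip RE R δξ s γ₁).indicator (fun _ => (1:ℝ)) x
                + (myStrip RE R δξ s γ₂).indicator (fun _ => (1:ℝ)) x) * |f x|) := by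
              apply mul_le_mul_of_nonneg_left _ (mul_nonneg hK20.le (abs_nonneg _))
              exact le_mul_of_one_le_left (abs_nonneg _) hin
          _ = K2 * |γ₁ - γ₂| *
              ((myStrip RE R δξ s γ₁).indicator (fun _ => (1:ℝ)) x * |f x|
                + (myStrip RE R δξ s γ₂).indicator (fun _ => (1:ℝ)) x * |f x|) := by
              ring
    · rw [integral_const_mul, integral_add (hindInt _ (my_strip_measurable RE R δξ s γ₁))
        (hindInt _ (my_strip_measurable RE R δξ s γ₂))]
  -- disjointness of the detector cells
  have hdisjcell : ∀ p ∈ Finset.Icc 1 P, ∀ p' ∈ Finset.Icc 1 P, p ≠ p' →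
      Disjoint (sCell δξ P p) (sCell δξ P p') := by
    have key : ∀ a b : ℕ, a < b → Disjoint (sCell δξ P a) (sCell δξ P b) := by
      intro a b hab
      rw [sCell, sCell, Set.Ico_disjoint_Ico]
      have hcast : (a:ℝ) + 1 ≤ (b:ℝ) := by exact_mod_cast hab
      have hord : sCen δξ P a + δξ / 2 ≤ sCen δξ P b - δξ / 2 := by
        simp only [sCen]; nlinarith
      calc min (sCen δξ P a + δξ / 2) (sCen δξ P b + δξ / 2)
          ≤ sCen δξ P a + δξ / 2 := min_le_left _ _
        _ ≤ sCen δξ P b - δξ / 2 := hord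
        _ ≤ max (sCen δξ P a - δξ / 2) (sCen δξ P b - δξ / 2) := le_max_right _ _
    intro p _ p' _ hne
    rcases lt_or_gt_of_ne hne with h | h
    · exact key p p' h
    · exact (key p' p h).symm
  have hcellvol : ∀ p : ℕ,
      (volume (sCell δξ P p ∩ Ioo (-(Wfan RE R) / 2) (Wfan RE R / 2))).toReal ≤ δξ := by
    intro p
    have h1 : volume (sCell δξ P p ∩ Ioo (-(Wfan RE R) / 2) (Wfan RE R / 2))
        ≤ volume (sCell δξ P p) := measure_mono inter_subset_left
    have h2 : volume (sCell δξ P p) = ENNReal.ofReal δξ := by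
      rw [sCell, Real.volume_Ico]; congr 1; ring
    exact ENNReal.toReal_le_of_le_ofReal hδξ0.le (h2 ▸ h1)
  haveI hfinIoo : IsFiniteMeasure (volume.restrict (Ioo (-(Wfan RE R) / 2) (Wfan RE R / 2))) :=
    ⟨by rw [Measure.restrict_apply_univ]; exact measure_Ioo_lt_top⟩
  -- per-angle estimate
  have hinner : ∀ α : ℝ,
      (∫ ξ in Ioo (-(Wfan RE R) / 2) (Wfan RE R / 2),
        (GFanSA RE R P Q αs f ξ α - GFanS RE R P f ξ α) ^ 2)
        ≤ C0 * (δα / δξ) ^ 2 * F := by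
    intro α
    obtain ⟨q₀, hq₀I, k, hmemcell, huniq, hdist⟩ := my_partition hgrid hgap α
    set β : ℝ := α + 2 * π * (k : ℝ) with hβdef
    have hcos : Real.cos β = Real.cos α := by
      rw [show β = α + (k:ℝ) * (2 * π) by rw [hβdef]; ring]
      exact Real.cos_add_int_mul_two_pi α k
    have hsin : Real.sin β = Real.sin α := by
      rw [show β = α + (k:ℝ) * (2 * π) by rw [hβdef]; ring]
      exact Real.sin_add_int_mul_two_pi α k
    have hdirv : dirv β = dirv α := by simp only [dirv, hcos, hsin]
    have hdirp : dirp β = dirp α := by simp only [dirp, hcos, hsin]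
    have hJper : ∀ p : ℕ,
        (∫ x in unitDisk,
          hatw δξ (fanProj RE R x β - sCen δξ P p) * f x / (dot2 x (dirp β) + RE))
        = ∫ x in unitDisk,
            hatw δξ (fanProj RE R x α - sCen δξ P p) * f x / (dot2 x (dirp α) + RE) := by
      intro p; simp only [fanProj, hdirv, hdirp]
    have hstripper : ∀ p : ℕ,
        myStrip RE R δξ (sCen δξ P p) β = myStrip RE R δξ (sCen δξ P p) α := by
      intro p; simp only [myStrip, hcos, hsin]
    set M : ℕ → ℝ := fun p => K2 * δα *
      ((∫ x in unitDisk,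
          (myStrip RE R δξ (sCen δξ P p) (αs q₀)).indicator (fun _ => (1:ℝ)) x * |f x|)
        + ∫ x in unitDisk,
            (myStrip RE R δξ (sCen δξ P p) α).indicator (fun _ => (1:ℝ)) x * |f x|) with hMdef
    have hb : ∀ p ∈ Finset.Icc 1 P,
        |(∫ x in unitDisk,
            hatw δξ (fanProj RE R x (αs q₀) - sCen δξ P p) * f x / (dot2 x (dirp (αs q₀)) + RE))
          - ∫ x in unitDisk,
              hatw δξ (fanProj RE R x α - sCen δξ P p) * f x / (dot2 x (dirp α) + RE)|
          ≤ M p := by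
      intro p _
      rw [← hJper p]
      have h := hJd (αs q₀) β p
      rw [hstripper p] at h
      apply h.trans
      rw [hMdef]
      apply mul_le_mul_of_nonneg_right (mul_le_mul_of_nonneg_left hdist hK20.le)
      apply add_nonneg <;>
        exact integral_nonneg fun x =>
          mul_nonneg (Set.indicator_nonneg (fun _ _ => zero_le_one) x) (abs_nonneg _)
    have hDred : ∀ ξ : ℝ, GFanSA RE R P Q αs f ξ α - GFanS RE R P f ξ α
        = (δξ ^ 2)⁻¹ * ∑ p ∈ Finset.Icc 1 P,
            (sCell δξ P p).indicator (fun _ => (1:ℝ)) ξ *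
            ((∫ x in unitDisk,
              hatw δξ (fanProj RE R x (αs q₀) - sCen δξ P p) * f x /
                (dot2 x (dirp (αs q₀)) + RE))
              - ∫ x in unitDisk,
                  hatw δξ (fanProj RE R x α - sCen δξ P p) * f x / (dot2 x (dirp α) + RE)) := by
      intro ξ
      simp only [GFanSA, GFanS, ← hδξdef]
      rw [← mul_sub]
      congr 1
      rw [← Finset.sum_sub_distrib]
      apply Finset.sum_congr rfl
      intro p _
      rw [mul_sub]
      congr 1
      rw [Finset.sum_eq_single_of_mem q₀ hq₀I
        (fun q hq hne => by
          simp only [Set.indicator_of_notMem (huniq q hq hne), mul_zero, zero_mul])]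
      simp only [Set.indicator_of_mem hmemcell, mul_one]
    have hpt : ∀ ξ : ℝ, (GFanSA RE R P Q αs f ξ α - GFanS RE R P f ξ α) ^ 2
        ≤ ((δξ ^ 2)⁻¹) ^ 2 * ∑ p ∈ Finset.Icc 1 P,
            (sCell δξ P p).indicator (fun _ => (1:ℝ)) ξ * M p ^ 2 := by
      intro ξ
      rw [hDred ξ]
      exact my_sq_sum_indicator hdisjcell _ M hb ξ _
    have hindconst : ∀ (p : ℕ) (c : ℝ),
        (fun ξ => (sCell δξ P p).indicator (fun _ => (1:ℝ)) ξ * c)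
          = (sCell δξ P p).indicator (fun _ => c) := by
      intro p c
      funext ξ
      by_cases hξ : ξ ∈ sCell δξ P p <;> simp [Set.indicator_apply, hξ]
    have hEint1 : ∀ p : ℕ, Integrable
        (fun ξ => (sCell δξ P p).indicator (fun _ => (1:ℝ)) ξ * M p ^ 2)
        (volume.restrict (Ioo (-(Wfan RE R) / 2) (Wfan RE R / 2))) := by
      intro p
      rw [hindconst p (M p ^ 2)]
      exact (integrable_const _).indicator measurableSet_Ico
    have hEint : Integrable (fun ξ => ((δξ ^ 2)⁻¹) ^ 2 * ∑ p ∈ Finset.Icc 1 P,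
        (sCell δξ P p).indicator (fun _ => (1:ℝ)) ξ * M p ^ 2)
        (volume.restrict (Ioo (-(Wfan RE R) / 2) (Wfan RE R / 2))) :=
      (integrable_finset_sum _ fun p _ => hEint1 p).const_mul _
    have hMsq : ∑ p ∈ Finset.Icc 1 P, M p ^ 2 ≤ 32 * K2 ^ 2 * Kov * δα ^ 2 * δξ * F := by
      have h1 : ∀ γ : ℝ, ∑ p ∈ Finset.Icc 1 P,
          (∫ x in unitDisk,
            (myStrip RE R δξ (sCen δξ P p) γ).indicator (fun _ => (1:ℝ)) x * |f x|) ^ 2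
          ≤ 8 * δξ * (Kov * F) := by
        intro γ
        calc ∑ p ∈ Finset.Icc 1 P,
            (∫ x in unitDisk,
              (myStrip RE R δξ (sCen δξ P p) γ).indicator (fun _ => (1:ℝ)) x * |f x|) ^ 2
            ≤ ∑ p ∈ Finset.Icc 1 P, 8 * δξ * ∫ x in unitDisk,
                (myStrip RE R δξ (sCen δξ P p) γ).indicator (fun _ => (1:ℝ)) x * f x ^ 2 :=
              Finset.sum_le_sum fun p _ => haterm γ p
          _ = 8 * δξ * ∑ p ∈ Finset.Icc 1 P, ∫ x in unitDisk,
                (myStrip RE R δξ (sCen δξ P p) γ).indicator (fun _ => (1:ℝ)) x * f x ^ 2 := by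
              rw [Finset.mul_sum]
          _ ≤ 8 * δξ * (Kov * F) :=
              mul_le_mul_of_nonneg_left (hsum_ind γ) (by positivity)
      calc ∑ p ∈ Finset.Icc 1 P, M p ^ 2
          ≤ ∑ p ∈ Finset.Icc 1 P, (K2 * δα) ^ 2 *
            (2 * (∫ x in unitDisk,
              (myStrip RE R δξ (sCen δξ P p) (αs q₀)).indicator (fun _ => (1:ℝ)) x * |f x|) ^ 2
            + 2 * (∫ x in unitDisk,
              (myStrip RE R δξ (sCen δξ P p) α).indicator (fun _ => (1:ℝ)) x * |f x|) ^ 2) := by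
            apply Finset.sum_le_sum
            intro p _
            simp only [hMdef]
            set u := ∫ x in unitDisk,
              (myStrip RE R δξ (sCen δξ P p) (αs q₀)).indicator (fun _ => (1:ℝ)) x * |f x|
            set v := ∫ x in unitDisk,
              (myStrip RE R δξ (sCen δξ P p) α).indicator (fun _ => (1:ℝ)) x * |f x|
            nlinarith [sq_nonneg (K2 * δα * (u - v)), sq_nonneg (K2 * δα * (u + v))]
        _ = (K2 * δα) ^ 2 * (2 * ∑ p ∈ Finset.Icc 1 P,
              (∫ x in unitDisk,
                (myStrip RE R δξ (sCen δξ P p) (αs q₀)).indicator (fun _ => (1:ℝ)) x * |f x|) ^ 2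
            + 2 * ∑ p ∈ Finset.Icc 1 P,
              (∫ x in unitDisk,
                (myStrip RE R δξ (sCen δξ P p) α).indicator (fun _ => (1:ℝ)) x * |f x|) ^ 2) := by
            rw [← Finset.mul_sum]
            congr 1
            rw [Finset.sum_add_distrib, ← Finset.mul_sum, ← Finset.mul_sum]
        _ ≤ (K2 * δα) ^ 2 * (2 * (8 * δξ * (Kov * F)) + 2 * (8 * δξ * (Kov * F))) := by
            apply mul_le_mul_of_nonneg_left _ (sq_nonneg _)
            have ha := h1 (αs q₀)
            have hb' := h1 α
            linarith
        _ = 32 * K2 ^ 2 * Kov * δα ^ 2 * δξ * F := by ring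
    calc (∫ ξ in Ioo (-(Wfan RE R) / 2) (Wfan RE R / 2),
          (GFanSA RE R P Q αs f ξ α - GFanS RE R P f ξ α) ^ 2)
        ≤ ∫ ξ in Ioo (-(Wfan RE R) / 2) (Wfan RE R / 2),
            ((δξ ^ 2)⁻¹) ^ 2 * ∑ p ∈ Finset.Icc 1 P,
              (sCell δξ P p).indicator (fun _ => (1:ℝ)) ξ * M p ^ 2 :=
          integral_mono_of_nonneg (ae_of_all _ fun ξ => sq_nonneg _) hEint (ae_of_all _ hpt)
      _ = ((δξ ^ 2)⁻¹) ^ 2 * ∑ p ∈ Finset.Icc 1 P,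
            (volume (sCell δξ P p ∩ Ioo (-(Wfan RE R) / 2) (Wfan RE R / 2))).toReal *
              M p ^ 2 := by
          rw [integral_const_mul]
          congr 1
          rw [integral_finset_sum _ fun p _ => hEint1 p]
          apply Finset.sum_congr rfl
          intro p _
          rw [hindconst p (M p ^ 2),
            integral_indicator (show MeasurableSet (sCell δξ P p) from measurableSet_Ico),
            Measure.restrict_restrict (show MeasurableSet (sCell δξ P p) from measurableSet_Ico),
            setIntegral_const, smul_eq_mul, Measure.real]
      _ ≤ ((δξ ^ 2)⁻¹) ^ 2 * ∑ p ∈ Finset.Icc 1 P, δξ * M p ^ 2 := by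
          apply mul_le_mul_of_nonneg_left _ (by positivity)
          exact Finset.sum_le_sum fun p _ =>
            mul_le_mul_of_nonneg_right (hcellvol p) (sq_nonneg _)
      _ = ((δξ ^ 2)⁻¹) ^ 2 * δξ * ∑ p ∈ Finset.Icc 1 P, M p ^ 2 := by
          rw [← Finset.mul_sum]; ring
      _ ≤ ((δξ ^ 2)⁻¹) ^ 2 * δξ * (32 * K2 ^ 2 * Kov * δα ^ 2 * δξ * F) :=
          mul_le_mul_of_nonneg_left hMsq (by positivity)
      _ = C0 * (δα / δξ) ^ 2 * F := by
          rw [hC0def]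
          field_simp
  -- putting the angular integral together
  set B : ℝ := C0 * (δα / δξ) ^ 2 * F with hBdef
  have hB0 : 0 ≤ B := mul_nonneg (mul_nonneg hC00.le (sq_nonneg _)) hF0
  haveI hfinIoc : IsFiniteMeasure (volume.restrict (Ioc (-π) π)) :=
    ⟨by rw [Measure.restrict_apply_univ]; exact measure_Ioc_lt_top⟩
  have hTbound : (∫ α in Ioc (-π) π, ∫ ξ in Ioo (-(Wfan RE R) / 2) (Wfan RE R / 2),
      (GFanSA RE R P Q αs f ξ α - GFanS RE R P f ξ α) ^ 2) ≤ 8 * B := by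
    calc (∫ α in Ioc (-π) π, ∫ ξ in Ioo (-(Wfan RE R) / 2) (Wfan RE R / 2),
          (GFanSA RE R P Q αs f ξ α - GFanS RE R P f ξ α) ^ 2)
        ≤ ∫ _ in Ioc (-π) π, B :=
          integral_mono_of_nonneg
            (ae_of_all _ fun α => integral_nonneg fun ξ => sq_nonneg _)
            (integrable_const _) (ae_of_all _ fun α => hinner α)
      _ = (volume (Ioc (-π) π)).toReal * B := by
          rw [setIntegral_const, smul_eq_mul, Measure.real]
      _ ≤ 8 * B := by
          have hvol : (volume (Ioc (-π) π)).toReal = 2 * π := by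
            rw [Real.volume_Ioc, ENNReal.toReal_ofReal (by linarith [Real.pi_pos])]
            ring
          rw [hvol]
          have h4 := Real.pi_le_four
          nlinarith
  have hT0 : 0 ≤ ∫ α in Ioc (-π) π, ∫ ξ in Ioo (-(Wfan RE R) / 2) (Wfan RE R / 2),
      (GFanSA RE R P Q αs f ξ α - GFanS RE R P f ξ α) ^ 2 :=
    integral_nonneg fun α => integral_nonneg fun ξ => sq_nonneg _
  simp only [nSinoW, nImg]
  rw [← Real.sqrt_eq_rpow, ← Real.sqrt_eq_rpow, ← hFdef]
  have hdd0 : 0 ≤ δα / δξ := div_nonneg hδα.le hδξ0.le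
  calc Real.sqrt (∫ α in Ioc (-π) π, ∫ ξ in Ioo (-(Wfan RE R) / 2) (Wfan RE R / 2),
        (GFanSA RE R P Q αs f ξ α - GFanS RE R P f ξ α) ^ 2)
      ≤ Real.sqrt (8 * B) := Real.sqrt_le_sqrt hTbound
    _ = Real.sqrt (8 * C0) * (δα / δξ) * Real.sqrt F := by
        rw [hBdef, show 8 * (C0 * (δα / δξ) ^ 2 * F) = 8 * C0 * ((δα / δξ) ^ 2 * F) by ring,
          Real.sqrt_mul (by positivity), Real.sqrt_mul (sq_nonneg _),
          Real.sqrt_sq hdd0]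
        ring


end
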